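/- arXiv:0811.2835 — 7 statements merged into one kernel-verified Lean document; each statement's English description precedes it below -/
import Mathlib

section
/- Let e and f be two orthonormal vectors in a complex Hilbert space H, let μ > 0 and 0 ≤ λ ≤ 1. Define ν = (1-λ)λ/((1+μ-λ)(μ+λ)) and ρ = (1-λ)μ/(μ+λ), and set w = √ρ·f - √(1-ρ)·e and v = √ν·f + √(1-ν)·e. Then w and v are unit vectors (so the rank-one operators w⊗w and v⊗v are projections) and (1+μ)(e⊗e) + (1-λ)(f⊗f) = w⊗w + (1+μ-λ)(v⊗v). -/
open scoped InnerProductSpace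

variable {H : Type*} [NormedAddCommGroup H] [InnerProductSpace ℂ H] [CompleteSpace H]

/-- The rank-one operator `x ⊗ x : y ↦ ⟨x, y⟩ • x` associated to a vector `x`. -/
noncomputable def rankOne (x : H) : H →L[ℂ] H := (innerSL ℂ x).smulRight x

set_option maxHeartbeats 1000000 in
/-- Lemma 2.1: for orthonormal vectors `e, f`, `μ > 0`, `0 ≤ λ ≤ 1`, with
`ν = (1-λ)λ/((1+μ-λ)(μ+λ))`, `ρ = (1-λ)μ/(μ+λ)`, `w = √ρ f - √(1-ρ) e`,
`v = √ν f + √(1-ν) e`, the vectors `w, v` are unit vectors and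
`(1+μ)(e⊗e) + (1-λ)(f⊗f) = w⊗w + (1+μ-λ)(v⊗v)`. -/
theorem stmt_0 (e f : H) (he : ‖e‖ = 1) (hf : ‖f‖ = 1) (hef : ⟪e, f⟫_ℂ = 0)
    (μ lam : ℝ) (hμ : 0 < μ) (hlam0 : 0 ≤ lam) (hlam1 : lam ≤ 1)
    (ν ρ : ℝ)
    (hν : ν = (1 - lam) * lam / ((1 + μ - lam) * (μ + lam)))
    (hρ : ρ = (1 - lam) * μ / (μ + lam))
    (w v : H)
    (hw : w = (Real.sqrt ρ : ℂ) • f - (Real.sqrt (1 - ρ) : ℂ) • e)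
    (hv : v = (Real.sqrt ν : ℂ) • f + (Real.sqrt (1 - ν) : ℂ) • e) :
    ‖w‖ = 1 ∧ ‖v‖ = 1 ∧
      ((1 + μ : ℝ) : ℂ) • rankOne e + ((1 - lam : ℝ) : ℂ) • rankOne f
        = rankOne w + ((1 + μ - lam : ℝ) : ℂ) • rankOne v := by
  have hd1 : (0:ℝ) < μ + lam := by linarith
  have hd2 : (0:ℝ) < 1 + μ - lam := by linarith
  have hd1' : (μ + lam : ℝ) ≠ 0 := hd1.ne'
  have hd2' : (1 + μ - lam : ℝ) ≠ 0 := hd2.ne'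
  have hρ0 : 0 ≤ ρ := by
    rw [hρ]; apply div_nonneg (by nlinarith) hd1.le
  have hρ1' : 1 - ρ = lam * (1 + μ) / (μ + lam) := by
    rw [hρ]; field_simp; ring
  have hρ1 : 0 ≤ 1 - ρ := by rw [hρ1']; positivity
  have hν0 : 0 ≤ ν := by
    rw [hν]; apply div_nonneg (by nlinarith) (by positivity)
  have hν1' : 1 - ν = μ * (1 + μ) / ((1 + μ - lam) * (μ + lam)) := by
    rw [hν]; field_simp; ring
  have hν1 : 0 ≤ 1 - ν := by rw [hν1']; positivity
  have hee : ⟪e, e⟫_ℂ = 1 := by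
    rw [inner_self_eq_norm_sq_to_K, he]; norm_num
  have hff : ⟪f, f⟫_ℂ = 1 := by
    rw [inner_self_eq_norm_sq_to_K, hf]; norm_num
  have hfe : ⟪f, e⟫_ℂ = 0 := by
    rw [← inner_conj_symm, hef, map_zero]
  -- real scalar identities
  have L1 : ρ + (1 + μ - lam) * ν = 1 - lam := by
    rw [hρ, hν]; field_simp
  have L2 : (1 - ρ) + (1 + μ - lam) * (1 - ν) = 1 + μ := by linarith
  have L3 : Real.sqrt ρ * Real.sqrt (1 - ρ)
      = (1 + μ - lam) * (Real.sqrt ν * Real.sqrt (1 - ν)) := by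
    rw [← Real.sqrt_mul hρ0, ← Real.sqrt_mul hν0]
    have key : ρ * (1 - ρ) = (1 + μ - lam) ^ 2 * (ν * (1 - ν)) := by
      rw [hρ, hν]; field_simp; ring
    rw [key, Real.sqrt_mul (sq_nonneg _), Real.sqrt_sq hd2.le]
  -- square roots squared
  have sρ : Real.sqrt ρ * Real.sqrt ρ = ρ := Real.mul_self_sqrt hρ0
  have sρ' : Real.sqrt (1 - ρ) * Real.sqrt (1 - ρ) = 1 - ρ := Real.mul_self_sqrt hρ1
  have sν : Real.sqrt ν * Real.sqrt ν = ν := Real.mul_self_sqrt hν0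
  have sν' : Real.sqrt (1 - ν) * Real.sqrt (1 - ν) = 1 - ν := Real.mul_self_sqrt hν1
  -- complex casts
  have L1' : (ρ:ℂ) + ((1:ℂ) + μ - lam) * ν = 1 - lam := by exact_mod_cast L1
  have L2' : ((1:ℂ) - ρ) + ((1:ℂ) + μ - lam) * (1 - (ν:ℂ)) = 1 + μ := by exact_mod_cast L2
  have L3' : ((Real.sqrt ρ : ℝ):ℂ) * ((Real.sqrt (1 - ρ) : ℝ):ℂ)
      = ((1:ℂ) + μ - lam) * (((Real.sqrt ν : ℝ):ℂ) * ((Real.sqrt (1 - ν) : ℝ):ℂ)) := by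
    exact_mod_cast L3
  have sρ2 : ((Real.sqrt ρ : ℝ):ℂ) * ((Real.sqrt ρ : ℝ):ℂ) = (ρ:ℂ) := by exact_mod_cast sρ
  have sρ'2 : ((Real.sqrt (1-ρ) : ℝ):ℂ) * ((Real.sqrt (1-ρ) : ℝ):ℂ) = 1 - (ρ:ℂ) := by
    exact_mod_cast sρ'
  have sν2 : ((Real.sqrt ν : ℝ):ℂ) * ((Real.sqrt ν : ℝ):ℂ) = (ν:ℂ) := by exact_mod_cast sν
  have sν'2 : ((Real.sqrt (1-ν) : ℝ):ℂ) * ((Real.sqrt (1-ν) : ℝ):ℂ) = 1 - (ν:ℂ) := by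
    exact_mod_cast sν'
  have hwn : ‖w‖ = 1 := by
    have hww : ⟪w, w⟫_ℂ = 1 := by
      rw [hw]
      simp only [inner_sub_left, inner_sub_right, inner_smul_left, inner_smul_right,
        hee, hff, hef, hfe, Complex.conj_ofReal, mul_zero, mul_one]
      linear_combination sρ2 + sρ'2
    have h2 : ‖w‖ ^ 2 = 1 := by rw [norm_sq_eq_re_inner (𝕜 := ℂ), hww]; simp
    nlinarith [norm_nonneg w]
  have hvn : ‖v‖ = 1 := by
    have hvv : ⟪v, v⟫_ℂ = 1 := by
      rw [hv]
      simp only [inner_add_left, inner_add_right, inner_smul_left, inner_smul_right,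
        hee, hff, hef, hfe, Complex.conj_ofReal, mul_zero, mul_one]
      linear_combination sν2 + sν'2
    have h2 : ‖v‖ ^ 2 = 1 := by rw [norm_sq_eq_re_inner (𝕜 := ℂ), hvv]; simp
    nlinarith [norm_nonneg v]
  refine ⟨hwn, hvn, ?_⟩
  ext y
  simp only [rankOne, ContinuousLinearMap.add_apply, ContinuousLinearMap.smul_apply,
    ContinuousLinearMap.smulRight_apply, innerSL_apply_apply, hw, hv,
    inner_sub_left, inner_add_left, inner_smul_left, Complex.conj_ofReal,
    smul_sub, smul_add, smul_smul, sub_smul, add_smul]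
  match_scalars
  · push_cast
    linear_combination -(⟪e, y⟫_ℂ) * L2' - (⟪e, y⟫_ℂ) * (sρ'2 + ((1:ℂ)+μ-lam) * sν'2)
      + (⟪f, y⟫_ℂ) * L3'
  · push_cast
    linear_combination -(⟪f, y⟫_ℂ) * L1' - (⟪f, y⟫_ℂ) * (sρ2 + ((1:ℂ)+μ-lam) * sν2)
      + (⟪e, y⟫_ℂ) * L3'
end

section
/- In the 2×2 complex matrices: for μ ≥ 0 and 0 ≤ λ ≤ 1, defining ρ and ν as ρ = (1-λ)μ/(μ+λ) and ν = (1-λ)λ/((1+μ-λ)(μ+λ)) when μ ≠ 0 (and ρ = 0, ν = 1 when μ = 0), we have diag(1+μ, 1-λ) = P₋ + (1+μ-λ)·P₊, where P₋ = [[1-ρ, -√(ρ(1-ρ))],[-√(ρ(1-ρ)), ρ]] and P₊ = [[1-ν, √(ν(1-ν))],[√(ν(1-ν)), ν]], and both P₋ and P₊ are self-adjoint idempotent matrices (projections). -/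
open Matrix

set_option maxHeartbeats 1600000 in
/-- The 2×2 matrix version of Lemma 2.1: with `ρ, ν` as prescribed,
`diag (1+μ, 1-λ) = P₋ + (1+μ-λ) P₊`, where `P₋, P₊` are the indicated symmetric
idempotent (projection) matrices. -/
theorem stmt_2 (μ lam : ℝ) (hμ : 0 ≤ μ) (hlam0 : 0 ≤ lam) (hlam1 : lam ≤ 1)
    (ρ ν : ℝ)
    (hρ : ρ = if μ = 0 then 0 else (1 - lam) * μ / (μ + lam))
    (hν : ν = if μ = 0 then 1 else (1 - lam) * lam / ((1 + μ - lam) * (μ + lam)))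
    (Pm Pp : Matrix (Fin 2) (Fin 2) ℝ)
    (hPm : Pm = !![1 - ρ, -Real.sqrt (ρ * (1 - ρ)); -Real.sqrt (ρ * (1 - ρ)), ρ])
    (hPp : Pp = !![1 - ν, Real.sqrt (ν * (1 - ν)); Real.sqrt (ν * (1 - ν)), ν]) :
    Matrix.diagonal ![1 + μ, 1 - lam] = Pm + (1 + μ - lam) • Pp ∧
      Pmᵀ = Pm ∧ Pm * Pm = Pm ∧ Ppᵀ = Pp ∧ Pp * Pp = Pp := by
  have key : (1 - ρ) + (1 + μ - lam) * (1 - ν) = 1 + μ ∧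
      ρ + (1 + μ - lam) * ν = 1 - lam ∧
      Real.sqrt (ρ * (1 - ρ)) = (1 + μ - lam) * Real.sqrt (ν * (1 - ν)) ∧
      0 ≤ ρ ∧ ρ ≤ 1 ∧ 0 ≤ ν ∧ ν ≤ 1 := by
    by_cases h0 : μ = 0
    · simp only [h0, if_pos] at hρ hν
      subst hρ hν h0
      norm_num
    · simp only [h0, if_neg, if_false] at hρ hν
      have hμ' : 0 < μ := lt_of_le_of_ne hμ (Ne.symm h0)
      have hml : 0 < μ + lam := by linarith
      have hc : 0 < 1 + μ - lam := by linarith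
      have hρ1 : 1 - ρ = lam * (1 + μ) / (μ + lam) := by
        rw [hρ]; field_simp; ring
      have hν1 : 1 - ν = μ * (1 + μ) / ((1 + μ - lam) * (μ + lam)) := by
        rw [hν]; field_simp; ring
      have hρ0 : 0 ≤ ρ := by
        rw [hρ]; exact div_nonneg (mul_nonneg (by linarith) hμ) hml.le
      have hν0 : 0 ≤ ν := by
        rw [hν]
        exact div_nonneg (mul_nonneg (by linarith) hlam0) (by positivity)
      have hρle : ρ ≤ 1 := by
        nlinarith [hρ1, div_nonneg (by nlinarith : (0:ℝ) ≤ lam * (1 + μ)) hml.le]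
      have hνle : ν ≤ 1 := by
        have : 0 ≤ μ * (1 + μ) / ((1 + μ - lam) * (μ + lam)) := by positivity
        linarith [hν1]
      refine ⟨?_, ?_, ?_, hρ0, hρle, hν0, hνle⟩
      · rw [hρ, hν]; field_simp; ring
      · rw [hρ, hν]; field_simp
      · have hsq : ρ * (1 - ρ) = (1 + μ - lam) ^ 2 * (ν * (1 - ν)) := by
          rw [hρ, hν]; field_simp; ring
        rw [hsq, Real.sqrt_mul (sq_nonneg _), Real.sqrt_sq hc.le]
  obtain ⟨h1, h2, h3, hρ0, hρ1, hν0, hν1⟩ := key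
  have hsρ : Real.sqrt (ρ * (1 - ρ)) * Real.sqrt (ρ * (1 - ρ)) = ρ * (1 - ρ) :=
    Real.mul_self_sqrt (mul_nonneg hρ0 (by linarith))
  have hsν : Real.sqrt (ν * (1 - ν)) * Real.sqrt (ν * (1 - ν)) = ν * (1 - ν) :=
    Real.mul_self_sqrt (mul_nonneg hν0 (by linarith))
  subst hPm hPp
  refine ⟨?_, ?_, ?_, ?_, ?_⟩
  · ext i j
    fin_cases i <;> fin_cases j <;>
      simp [Matrix.diagonal, Matrix.add_apply, Matrix.smul_apply] <;> linarith
  · ext i j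
    fin_cases i <;> fin_cases j <;> simp [Matrix.transpose_apply]
  · rw [Matrix.mul_fin_two]
    ext i j
    fin_cases i <;> fin_cases j <;> simp <;> nlinarith [hsρ]
  · ext i j
    fin_cases i <;> fin_cases j <;> simp [Matrix.transpose_apply]
  · rw [Matrix.mul_fin_two]
    ext i j
    fin_cases i <;> fin_cases j <;> simp <;> nlinarith [hsν]
end

section
/- Let P and Q be rank-one projections on a complex Hilbert space H and let a ≤ c ≤ b be nonnegative reals. Then there exist rank-one projections P' and Q' on H such that a·P + b·Q = c·P' + (a+b-c)·Q'. -/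
open scoped InnerProductSpace

variable {H : Type*} [NormedAddCommGroup H] [InnerProductSpace ℂ H] [CompleteSpace H]

/-- A rank-one (orthogonal) projection: the projection onto the span of a unit vector. -/
def IsRankOneProjection (P : H →L[ℂ] H) : Prop := ∃ x : H, ‖x‖ = 1 ∧ P = rankOne x

lemma rankOne_apply (x z : H) : rankOne x z = ⟪x, z⟫_ℂ • x := rfl

lemma rankOne_real_smul (r : ℝ) (w : H) :
    rankOne ((r : ℂ) • w) = ((r : ℂ) ^ 2) • rankOne w := by
  ext z
  simp only [rankOne_apply, ContinuousLinearMap.smul_apply, inner_smul_left,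
    Complex.conj_ofReal, smul_smul]
  ring_nf

lemma rankOne_rotate (p q : ℝ) (hpq : p ^ 2 + q ^ 2 = 1) (x1 y1 : H) :
    rankOne ((p : ℂ) • x1 - (q : ℂ) • y1) + rankOne ((q : ℂ) • x1 + (p : ℂ) • y1)
      = rankOne x1 + rankOne y1 := by
  have h : (p : ℂ) ^ 2 + (q : ℂ) ^ 2 = 1 := by exact_mod_cast congrArg (Complex.ofReal ·) hpq
  ext z
  simp only [rankOne_apply, ContinuousLinearMap.add_apply, inner_sub_left, inner_add_left,
    inner_smul_left, Complex.conj_ofReal, smul_sub, smul_add, smul_smul]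
  match_scalars
  · linear_combination ⟪x1, z⟫_ℂ * h
  · linear_combination ⟪y1, z⟫_ℂ * h

lemma inner_rotate (p q : ℝ) (hpq : p ^ 2 + q ^ 2 = 1) (x1 y1 : H) :
    (‖(p : ℂ) • x1 - (q : ℂ) • y1‖ ^ 2 : ℝ) + ‖(q : ℂ) • x1 + (p : ℂ) • y1‖ ^ 2
      = ‖x1‖ ^ 2 + ‖y1‖ ^ 2 := by
  have h : (p : ℂ) ^ 2 + (q : ℂ) ^ 2 = 1 := by exact_mod_cast congrArg (Complex.ofReal ·) hpq
  have key : (⟪(p : ℂ) • x1 - (q : ℂ) • y1, (p : ℂ) • x1 - (q : ℂ) • y1⟫_ℂ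
      + ⟪(q : ℂ) • x1 + (p : ℂ) • y1, (q : ℂ) • x1 + (p : ℂ) • y1⟫_ℂ)
      = ⟪x1, x1⟫_ℂ + ⟪y1, y1⟫_ℂ := by
    simp only [inner_sub_left, inner_sub_right, inner_add_left, inner_add_right,
      inner_smul_left, inner_smul_right, Complex.conj_ofReal]
    linear_combination (⟪x1, x1⟫_ℂ + ⟪y1, y1⟫_ℂ) * h
  rw [inner_self_eq_norm_sq_to_K, inner_self_eq_norm_sq_to_K, inner_self_eq_norm_sq_to_K,
    inner_self_eq_norm_sq_to_K] at key
  exact_mod_cast key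

/-- Lemma 2.2: if `P, Q` are rank-one projections and `0 ≤ a ≤ c ≤ b`, then there are
rank-one projections `P', Q'` with `aP + bQ = cP' + (a+b-c)Q'`. -/
theorem stmt_3 (P Q : H →L[ℂ] H) (hP : IsRankOneProjection P) (hQ : IsRankOneProjection Q)
    (a b c : ℝ) (ha : 0 ≤ a) (hac : a ≤ c) (hcb : c ≤ b) :
    ∃ P' Q' : H →L[ℂ] H, IsRankOneProjection P' ∧ IsRankOneProjection Q' ∧
      (a : ℂ) • P + (b : ℂ) • Q = (c : ℂ) • P' + ((a + b - c : ℝ) : ℂ) • Q' := by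
  obtain ⟨x, hx, rfl⟩ := hP
  obtain ⟨y, hy, rfl⟩ := hQ
  rcases eq_or_lt_of_le ha with rfl | ha'
  · -- a = 0 : take P' = Q' = Q
    refine ⟨rankOne y, rankOne y, ⟨y, hy, rfl⟩, ⟨y, hy, rfl⟩, ?_⟩
    have hcc : (c : ℂ) + ((0 + b - c : ℝ) : ℂ) = (b : ℂ) := by push_cast; ring
    rw [← add_smul, hcc, Complex.ofReal_zero, zero_smul, zero_add]
  · -- a > 0
    have hb : (0 : ℝ) < b := lt_of_lt_of_le ha' (hac.trans hcb)
    have hc : (0 : ℝ) < c := lt_of_lt_of_le ha' hac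
    have hd : (0 : ℝ) < a + b - c := by linarith
    set x1 : H := ((Real.sqrt a : ℂ)) • x with hx1
    set y1 : H := ((Real.sqrt b : ℂ)) • y with hy1
    have hnx1 : ‖x1‖ ^ 2 = a := by
      rw [hx1, norm_smul, hx, mul_one, Complex.norm_real, Real.norm_eq_abs,
        abs_of_nonneg (Real.sqrt_nonneg a), Real.sq_sqrt ha]
    have hny1 : ‖y1‖ ^ 2 = b := by
      rw [hy1, norm_smul, hy, mul_one, Complex.norm_real, Real.norm_eq_abs,
        abs_of_nonneg (Real.sqrt_nonneg b), Real.sq_sqrt hb.le]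
    -- the continuous function θ ↦ ‖cos θ • x1 - sin θ • y1‖ ^ 2
    set g : ℝ → ℝ := fun θ => ‖((Real.cos θ : ℂ)) • x1 - ((Real.sin θ : ℂ)) • y1‖ ^ 2 with hg
    have hgc : Continuous g := by
      apply Continuous.pow
      apply Continuous.norm
      fun_prop
    have hg0 : g 0 = a := by
      simp only [hg, Real.cos_zero, Real.sin_zero, Complex.ofReal_one, Complex.ofReal_zero,
        one_smul, zero_smul, sub_zero]
      exact hnx1
    have hgp : g (Real.pi / 2) = b := by
      simp only [hg, Real.cos_pi_div_two, Real.sin_pi_div_two, Complex.ofReal_one,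
        Complex.ofReal_zero, one_smul, zero_smul, zero_sub, norm_neg]
      exact hny1
    have hmem : c ∈ Set.Icc (g 0) (g (Real.pi / 2)) := by
      rw [hg0, hgp]; exact ⟨hac, hcb⟩
    obtain ⟨θ, -, hθ⟩ := intermediate_value_Icc
      (by positivity : (0:ℝ) ≤ Real.pi / 2) hgc.continuousOn hmem
    set p : ℝ := Real.cos θ
    set q : ℝ := Real.sin θ
    have hpq : p ^ 2 + q ^ 2 = 1 := by
      rw [add_comm]; exact Real.sin_sq_add_cos_sq θ
    set u1 : H := ((p : ℂ)) • x1 - ((q : ℂ)) • y1 with hu1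
    set v1 : H := ((q : ℂ)) • x1 + ((p : ℂ)) • y1 with hv1
    have hnu1 : ‖u1‖ ^ 2 = c := hθ
    have hnv1 : ‖v1‖ ^ 2 = a + b - c := by
      have := inner_rotate p q hpq x1 y1
      rw [← hu1, ← hv1, hnu1, hnx1, hny1] at this
      linarith
    set u : H := ((Real.sqrt c : ℂ))⁻¹ • u1 with hu
    set v : H := ((Real.sqrt (a + b - c) : ℂ))⁻¹ • v1 with hv
    have hsqc : Real.sqrt c ≠ 0 := by positivity
    have hsqd : Real.sqrt (a + b - c) ≠ 0 := by positivity
    have hnu : ‖u‖ = 1 := by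
      rw [hu, norm_smul, norm_inv, Complex.norm_real, Real.norm_eq_abs,
        abs_of_nonneg (Real.sqrt_nonneg c)]
      have : ‖u1‖ = Real.sqrt c := by
        rw [← Real.sqrt_sq (norm_nonneg u1), hnu1]
      rw [this, inv_mul_cancel₀ hsqc]
    have hnv : ‖v‖ = 1 := by
      rw [hv, norm_smul, norm_inv, Complex.norm_real, Real.norm_eq_abs,
        abs_of_nonneg (Real.sqrt_nonneg _)]
      have : ‖v1‖ = Real.sqrt (a + b - c) := by
        rw [← Real.sqrt_sq (norm_nonneg v1), hnv1]
      rw [this, inv_mul_cancel₀ hsqd]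
    refine ⟨rankOne u, rankOne v, ⟨u, hnu, rfl⟩, ⟨v, hnv, rfl⟩, ?_⟩
    have hru : (c : ℂ) • rankOne u = rankOne u1 := by
      have h1 : u1 = ((Real.sqrt c : ℂ)) • u := by
        rw [hu, smul_smul, mul_inv_cancel₀ (by exact_mod_cast hsqc), one_smul]
      rw [h1, rankOne_real_smul]
      norm_cast
      rw [Real.sq_sqrt hc.le]
    have hrv : ((a + b - c : ℝ) : ℂ) • rankOne v = rankOne v1 := by
      have h1 : v1 = ((Real.sqrt (a + b - c) : ℂ)) • v := by
        rw [hv, smul_smul, mul_inv_cancel₀ (by exact_mod_cast hsqd), one_smul]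
      rw [h1, rankOne_real_smul]
      norm_cast
      rw [Real.sq_sqrt hd.le]
    have hrx : (a : ℂ) • rankOne x = rankOne x1 := by
      rw [hx1, rankOne_real_smul]
      norm_cast
      rw [Real.sq_sqrt ha]
    have hry : (b : ℂ) • rankOne y = rankOne y1 := by
      rw [hy1, rankOne_real_smul]
      norm_cast
      rw [Real.sq_sqrt hb.le]
    rw [hru, hrv, hrx, hry, hu1, hv1]
    exact (rankOne_rotate p q hpq x1 y1).symm
end

section
/- Let E and F be mutually orthogonal Murray–von Neumann equivalent projections in a C*-algebra A, let V ∈ A be a partial isometry with V*V = E and VV* = F, let 0 ≤ λ ≤ 1 and μ ≥ 0, and define ρ = (1-λ)μ/(μ+λ), ν = (1-λ)λ/((1+μ-λ)(μ+λ)) (with ρ = 0, ν = 1 when μ = 0). Then P₋ := (1-ρ)E - √(ρ(1-ρ))(V+V*) + ρF and P₊ := (1-ν)E + √(ν(1-ν))(V+V*) + νF are projections in A, each equivalent to E, and (1+μ)E + (1-λ)F = P₋ + (1+μ-λ)P₊. -/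
variable {A : Type*} [NormedRing A] [StarRing A] [CStarRing A] [CompleteSpace A]
  [NormedAlgebra ℂ A] [StarModule ℂ A]

/-- A projection (self-adjoint idempotent) in a C*-algebra. -/
def IsProjection (p : A) : Prop := star p = p ∧ p * p = p

/-- Murray–von Neumann equivalence of projections in a C*-algebra. -/
def MvNEquiv (p q : A) : Prop := ∃ w : A, star w * w = p ∧ w * star w = q

lemma aux_W (E F V : A) (hEs : star E = E) (hEi : E * E = E)
    (hV1 : star V * V = E) (hV2 : V * star V = F)
    (hEV : E * V = 0) (hVE : V * E = V)
    (a b : ℝ) (hab : a ^ 2 + b ^ 2 = 1) :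
    star ((a:ℂ) • E + (b:ℂ) • V) * ((a:ℂ) • E + (b:ℂ) • V) = E ∧
    ((a:ℂ) • E + (b:ℂ) • V) * star ((a:ℂ) • E + (b:ℂ) • V)
      = ((a^2 : ℝ) : ℂ) • E + ((a*b : ℝ) : ℂ) • (V + star V) + ((b^2 : ℝ) : ℂ) • F ∧
    ((a:ℂ) • E + (b:ℂ) • V) * E = (a:ℂ) • E + (b:ℂ) • V := by
  have hEV' : E * star V = star V := by
    have := congrArg star hVE
    simpa [star_mul, hEs] using this
  have hV'E : star V * E = 0 := by
    have := congrArg star hEV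
    simpa [star_mul, hEs] using this
  have hstarW : star ((a:ℂ) • E + (b:ℂ) • V) = (a:ℂ) • E + (b:ℂ) • star V := by
    simp [star_smul, hEs, Complex.star_def, Complex.conj_ofReal]
  refine ⟨?_, ?_, ?_⟩
  · rw [hstarW]
    simp only [add_mul, mul_add, smul_mul_assoc, mul_smul_comm, smul_smul,
      hEi, hEV, hV'E, hV1, smul_zero, add_zero, zero_add]
    rw [← add_smul]
    have h : ((a:ℂ) * a + (b:ℂ) * b) = 1 := by
      have h' : a * a + b * b = 1 := by nlinarith [hab]
      calc ((a:ℂ) * a + (b:ℂ) * b) = ((a * a + b * b : ℝ) : ℂ) := by push_cast; ring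
        _ = 1 := by rw [h']; norm_num
    rw [h, one_smul]
  · rw [hstarW]
    simp only [add_mul, mul_add, smul_mul_assoc, mul_smul_comm, smul_smul,
      hEi, hEV', hVE, hV2, smul_zero, add_zero, zero_add, smul_add]
    push_cast
    ring_nf
    module
  · simp only [add_mul, smul_mul_assoc, hEi, hVE]

/-- Lemma 2.6 / Remark 2.7(i): for mutually orthogonal equivalent projections `E, F`
with `V* V = E`, `V V* = F`, and `ρ, ν` as prescribed, the elements
`P₋ = (1-ρ)E - √(ρ(1-ρ))(V+V*) + ρF` and `P₊ = (1-ν)E + √(ν(1-ν))(V+V*) + νF`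
are projections, each equivalent to `E`, and `(1+μ)E + (1-λ)F = P₋ + (1+μ-λ)P₊`. -/
theorem stmt_7 (E F V : A) (hE : IsProjection E) (hF : IsProjection F)
    (horth : E * F = 0) (hV1 : star V * V = E) (hV2 : V * star V = F)
    (μ lam : ℝ) (hμ : 0 ≤ μ) (hlam0 : 0 ≤ lam) (hlam1 : lam ≤ 1)
    (ρ ν : ℝ)
    (hρ : ρ = if μ = 0 then 0 else (1 - lam) * μ / (μ + lam))
    (hν : ν = if μ = 0 then 1 else (1 - lam) * lam / ((1 + μ - lam) * (μ + lam)))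
    (Pm Pp : A)
    (hPm : Pm = ((1 - ρ : ℝ) : ℂ) • E - ((Real.sqrt (ρ * (1 - ρ)) : ℝ) : ℂ) • (V + star V)
        + ((ρ : ℝ) : ℂ) • F)
    (hPp : Pp = ((1 - ν : ℝ) : ℂ) • E + ((Real.sqrt (ν * (1 - ν)) : ℝ) : ℂ) • (V + star V)
        + ((ν : ℝ) : ℂ) • F) :
    IsProjection Pm ∧ IsProjection Pp ∧ MvNEquiv E Pm ∧ MvNEquiv E Pp ∧
      ((1 + μ : ℝ) : ℂ) • E + ((1 - lam : ℝ) : ℂ) • F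
        = Pm + ((1 + μ - lam : ℝ) : ℂ) • Pp := by
  obtain ⟨hEs, hEi⟩ := hE
  obtain ⟨hFs, hFi⟩ := hF
  -- basic algebraic facts
  have hVE : V * E = V := by
    have h0 : star (V * E - V) * (V * E - V) = 0 := by
      have h1 : star (V * E - V) * (V * E - V)
          = E * (star V * V) * E - E * (star V * V) - (star V * V) * E + star V * V := by
        simp only [star_sub, star_mul, hEs]
        noncomm_ring
      rw [h1, hV1, hEi]
      simp [hEi]
    have := (CStarRing.star_mul_self_eq_zero_iff (V * E - V)).mp h0
    linear_combination (norm := noncomm_ring) this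
  have hFV : F * V = V := by
    have h0 : (F * V - V) * star (F * V - V) = 0 := by
      have h1 : (F * V - V) * star (F * V - V)
          = F * (V * star V) * F - F * (V * star V) - (V * star V) * F + V * star V := by
        simp only [star_sub, star_mul, hFs]
        noncomm_ring
      rw [h1, hV2, hFi]
      simp [hFi]
    have := (CStarRing.mul_star_self_eq_zero_iff (F * V - V)).mp h0
    linear_combination (norm := noncomm_ring) this
  have hEV : E * V = 0 := by
    rw [← hFV, ← mul_assoc, horth, zero_mul]
  -- ranges of ρ and ν, and scalar identities
  have hρν : (0 ≤ ρ ∧ ρ ≤ 1) ∧ (0 ≤ ν ∧ ν ≤ 1) := by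
    rcases eq_or_lt_of_le hμ with h0 | hpos
    · simp [hρ, hν, ← h0]
    · have hμ' : μ ≠ 0 := ne_of_gt hpos
      have hD : 0 < μ + lam := by linarith
      have hc : 0 < 1 + μ - lam := by linarith
      rw [hρ, hν, if_neg hμ', if_neg hμ']
      have hmul : 0 < (1 + μ - lam) * (μ + lam) := mul_pos hc hD
      refine ⟨⟨div_nonneg (by nlinarith) hD.le, ?_⟩,
        ⟨div_nonneg (by nlinarith) hmul.le, ?_⟩⟩
      · rw [div_le_one hD]; nlinarith
      · rw [div_le_one hmul]; nlinarith
  obtain ⟨⟨hρ0, hρ1⟩, hν0, hν1⟩ := hρν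
  have hid1 : (1 - ρ) + (1 + μ - lam) * (1 - ν) = 1 + μ := by
    rcases eq_or_ne μ 0 with h0 | hμ'
    · simp [hρ, hν, h0]
    · have hpos : 0 < μ := lt_of_le_of_ne hμ (Ne.symm hμ')
      have hD : (μ + lam) ≠ 0 := ne_of_gt (by linarith)
      have hc : (1 + μ - lam) ≠ 0 := ne_of_gt (by linarith)
      rw [hρ, hν, if_neg hμ', if_neg hμ']
      field_simp
      ring
  have hid2 : ρ + (1 + μ - lam) * ν = 1 - lam := by
    rcases eq_or_ne μ 0 with h0 | hμ'
    · simp [hρ, hν, h0]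
    · have hpos : 0 < μ := lt_of_le_of_ne hμ (Ne.symm hμ')
      have hD : (μ + lam) ≠ 0 := ne_of_gt (by linarith)
      have hc : (1 + μ - lam) ≠ 0 := ne_of_gt (by linarith)
      rw [hρ, hν, if_neg hμ', if_neg hμ']
      field_simp
  have hid3 : (1 + μ - lam) * Real.sqrt (ν * (1 - ν)) = Real.sqrt (ρ * (1 - ρ)) := by
    rcases eq_or_ne μ 0 with h0 | hμ'
    · simp [hρ, hν, h0]
    · have hpos : 0 < μ := lt_of_le_of_ne hμ (Ne.symm hμ')
      have hD : (μ + lam) ≠ 0 := by positivity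
      have hc : 0 < 1 + μ - lam := by nlinarith
      have heq : ρ * (1 - ρ) = (1 + μ - lam) ^ 2 * (ν * (1 - ν)) := by
        have hD : (μ + lam) ≠ 0 := ne_of_gt (by linarith)
        have hc' : (1 + μ - lam) ≠ 0 := ne_of_gt hc
        rw [hρ, hν, if_neg hμ', if_neg hμ']
        field_simp
        ring
      rw [heq, Real.sqrt_mul (sq_nonneg _), Real.sqrt_sq hc.le]
  -- set up partial isometries
  set am : ℝ := Real.sqrt (1 - ρ) with ham
  set bm : ℝ := -Real.sqrt ρ with hbm
  set ap : ℝ := Real.sqrt (1 - ν) with hap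
  set bp : ℝ := Real.sqrt ν with hbp
  have ham2 : am ^ 2 = 1 - ρ := Real.sq_sqrt (by linarith)
  have hbm2 : bm ^ 2 = ρ := by rw [hbm, neg_pow, Real.sq_sqrt hρ0]; ring
  have hap2 : ap ^ 2 = 1 - ν := Real.sq_sqrt (by linarith)
  have hbp2 : bp ^ 2 = ν := Real.sq_sqrt hν0
  have hambm : am * bm = -Real.sqrt (ρ * (1 - ρ)) := by
    rw [ham, hbm, mul_comm ρ, Real.sqrt_mul (by linarith)]
    ring
  have hapbp : ap * bp = Real.sqrt (ν * (1 - ν)) := by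
    rw [hap, hbp, mul_comm ν, Real.sqrt_mul (by linarith)]
    all_goals ring
  obtain ⟨hm1, hm2, hm3⟩ := aux_W E F V hEs hEi hV1 hV2 hEV hVE am bm (by rw [ham2, hbm2]; ring)
  obtain ⟨hp1, hp2, hp3⟩ := aux_W E F V hEs hEi hV1 hV2 hEV hVE ap bp (by rw [hap2, hbp2]; ring)
  set Wm : A := (am:ℂ) • E + (bm:ℂ) • V with hWm
  set Wp : A := (ap:ℂ) • E + (bp:ℂ) • V with hWp
  have hPmW : Pm = Wm * star Wm := by
    rw [hPm, hm2, ham2, hbm2, hambm]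
    push_cast
    try module
  have hPpW : Pp = Wp * star Wp := by
    rw [hPp, hp2, hap2, hbp2, hapbp]
    all_goals (try push_cast; try module)
  have projWW : ∀ W : A, star W * W = E → W * E = W → IsProjection (W * star W) := by
    intro W h1 h2
    constructor
    · simp [star_mul]
    · calc W * star W * (W * star W) = W * (star W * W) * star W := by noncomm_ring
        _ = W * star W := by rw [h1, h2]
  refine ⟨?_, ?_, ?_, ?_, ?_⟩
  · rw [hPmW]; exact projWW Wm hm1 hm3
  · rw [hPpW]; exact projWW Wp hp1 hp3
  · exact ⟨Wm, hm1, hPmW.symm⟩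
  · exact ⟨Wp, hp1, hPpW.symm⟩
  · rw [hPm, hPp]
    have c1 : (1 : ℂ) - (ρ : ℝ) + ((1 : ℂ) + (μ : ℝ) - (lam : ℝ)) * (1 - (ν : ℝ)) = 1 + (μ : ℝ) := by
      exact_mod_cast congrArg (fun x : ℝ => (x : ℂ)) hid1
    have c2 : ((ρ : ℝ) : ℂ) + ((1 : ℂ) + (μ : ℝ) - (lam : ℝ)) * ((ν : ℝ) : ℂ) = 1 - (lam : ℝ) := by
      exact_mod_cast congrArg (fun x : ℝ => (x : ℂ)) hid2
    have c3 : ((1 : ℂ) + (μ : ℝ) - (lam : ℝ)) * ((Real.sqrt (ν * (1 - ν)) : ℝ) : ℂ)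
        = ((Real.sqrt (ρ * (1 - ρ)) : ℝ) : ℂ) := by
      exact_mod_cast congrArg (fun x : ℝ => (x : ℂ)) hid3
    match_scalars <;>
      (push_cast
       first
       | linear_combination c1
       | linear_combination c2
       | linear_combination c3
       | linear_combination -c3
       | ring)
end

section
/- Let M be a von Neumann algebra, A ∈ M with 0 ≤ A ≤ 2I, R_A = I (A has dense range), and suppose there is a unitary U ∈ M with UAU* = 2I - A. Then A is the sum of two projections in M. -/
set_option synthInstance.maxHeartbeats 1000000
set_option maxHeartbeats 2000000
set_option linter.unusedVariables false


variable {H : Type*} [NormedAddCommGroup H] [InnerProductSpace ℂ H] [CompleteSpace H]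


open Polynomial in
/-- If `T` commutes with a selfadjoint `a`, it commutes with `cfc f a`. -/
lemma commute_cfc' {H : Type*} [NormedAddCommGroup H] [InnerProductSpace ℂ H] [CompleteSpace H]
    (a T : H →L[ℂ] H) (ha : IsSelfAdjoint a) (hT : T * a = a * T)
    (f : ℝ → ℝ) (hf : ContinuousOn f (spectrum ℝ a)) :
    T * cfc f a = cfc f a * T := by
  rw [cfc_apply f a ha hf]
  -- the subalgebra of continuous functions whose cfc commutes with T
  let Scomm : Subalgebra ℝ C((spectrum ℝ a : Set ℝ), ℝ) :=
    (Subalgebra.centralizer ℝ {T}).comap ((cfcHom ha (R := ℝ)).toAlgHom)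
  have hX : (toContinuousMapOnAlgHom (spectrum ℝ a) X) ∈ Scomm := by
    have hid : cfcHom ha (R := ℝ) (toContinuousMapOnAlgHom (spectrum ℝ a) X) = a := by
      have h1 : (toContinuousMapOnAlgHom (spectrum ℝ a) X)
          = ContinuousMap.restrict (spectrum ℝ a) (ContinuousMap.id ℝ) := by
        ext x; simp
      rw [h1]
      exact cfcHom_id ha
    have hmem : (cfcHom ha (R := ℝ)) ((toContinuousMapOnAlgHom (spectrum ℝ a)) X)
        ∈ Subalgebra.centralizer ℝ {T} := by
      rw [hid, Subalgebra.mem_centralizer_iff]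
      rintro g rfl
      exact hT
    exact (Subalgebra.mem_comap _ _ _).mpr hmem
  have hle : polynomialFunctions (spectrum ℝ a) ≤ Scomm := by
    rw [polynomialFunctions.eq_adjoin_X]
    exact Algebra.adjoin_le (by simpa using hX)
  have hclosedS : IsClosed {g : C((spectrum ℝ a : Set ℝ), ℝ) |
      T * cfcHom ha (R := ℝ) g = cfcHom ha (R := ℝ) g * T} := by
    apply isClosed_eq
    · exact (continuous_mul_left T).comp (cfcHom_continuous ha)
    · exact (continuous_mul_right T).comp (cfcHom_continuous ha)
  have hdense : Dense ((polynomialFunctions (spectrum ℝ a) : Subalgebra ℝ C((spectrum ℝ a : Set ℝ), ℝ)) : Set C((spectrum ℝ a : Set ℝ), ℝ)) := by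
    have h := polynomialFunctions.topologicalClosure (spectrum ℝ a)
    rw [dense_iff_closure_eq, ← Subalgebra.topologicalClosure_coe, h]
    rfl
  have hsub : (polynomialFunctions (spectrum ℝ a) : Set _) ⊆ {g : C((spectrum ℝ a : Set ℝ), ℝ) |
      T * cfcHom ha (R := ℝ) g = cfcHom ha (R := ℝ) g * T} := by
    intro g hg
    have hmem := (Subalgebra.mem_comap _ _ _).mp (hle hg)
    rw [Subalgebra.mem_centralizer_iff] at hmem
    exact hmem T rfl
  have : closure (polynomialFunctions (spectrum ℝ a) : Set _) ⊆ {g : C((spectrum ℝ a : Set ℝ), ℝ) |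
      T * cfcHom ha (R := ℝ) g = cfcHom ha (R := ℝ) g * T} :=
    hclosedS.closure_subset_iff.mpr hsub
  rw [hdense.closure_eq] at this
  exact this (Set.mem_univ _)



local notation "⟪" x ", " y "⟫" => @inner ℂ _ _ x y

lemma sa_inner_move {T : H →L[ℂ] H} (hT : IsSelfAdjoint T) (x y : H) :
    ⟪T x, y⟫ = ⟪x, T y⟫ := by
  conv_lhs => rw [← hT.adjoint_eq]
  exact ContinuousLinearMap.adjoint_inner_left T y x

/-- Existence of the "partner" operator `s` with `s² = 1 - c²`, `sc = cs = m`. -/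
lemma exists_partner (c m : H →L[ℂ] H) (hc : IsSelfAdjoint c) (hm : IsSelfAdjoint m)
    (hcm : c * m = m * c) (hm2 : m * m = c * c - c * c * (c * c)) :
    ∃ s : H →L[ℂ] H, IsSelfAdjoint s ∧ s * s = 1 - c * c ∧ s * c = m ∧ c * s = m ∧
      ∀ T : H →L[ℂ] H, T * c = c * T → T * m = m * T → T * s = s * T := by
  classical
  -- pointwise norm bound
  have hnormsq : ∀ x : H, ‖m x‖ ^ 2 = ‖c x‖ ^ 2 - ‖c (c x)‖ ^ 2 := by
    intro x
    have h1 : (⟪m x, m x⟫ : ℂ) = ⟪x, (m * m) x⟫ := by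
      rw [sa_inner_move hm]; rfl
    rw [hm2] at h1
    have h2 : (⟪x, (c * c - c * c * (c * c)) x⟫ : ℂ)
        = ⟪c x, c x⟫ - ⟪c (c x), c (c x)⟫ := by
      rw [ContinuousLinearMap.sub_apply, inner_sub_right]
      congr 1
      · rw [ContinuousLinearMap.mul_apply, ← sa_inner_move hc]
      · rw [show ((c * c * (c * c)) x) = c (c (c (c x))) from rfl,
          ← sa_inner_move hc, ← sa_inner_move hc]
    rw [h2] at h1
    have hre : ∀ z : H, (⟪z, z⟫ : ℂ).re = ‖z‖ ^ 2 := by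
      intro z
      rw [← inner_self_eq_norm_sq (𝕜 := ℂ)]
      rfl
    have := congrArg Complex.re h1
    rw [Complex.sub_re, hre, hre, hre] at this
    exact this
  have hbound : ∀ x : H, ‖m x‖ ≤ ‖c x‖ := by
    intro x
    have h := hnormsq x
    nlinarith [norm_nonneg (m x), norm_nonneg (c x), sq_nonneg (‖c (c x)‖)]
  have hker : ∀ x : H, c x = 0 → m x = 0 := by
    intro x hx
    have := hbound x
    rw [hx] at this
    simp only [norm_zero] at this
    exact norm_le_zero_iff.mp this
  have hwd : ∀ y y' : H, c y = c y' → m y = m y' := by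
    intro y y' h
    have h0 : c (y - y') = 0 := by rw [map_sub, h, sub_self]
    have := hker _ h0
    rw [map_sub, sub_eq_zero] at this
    exact this
  set V : Submodule ℂ H := LinearMap.range (c : H →ₗ[ℂ] H) with hV
  set Vb : Submodule ℂ H := V.topologicalClosure with hVb
  haveI : CompleteSpace Vb := V.isClosed_topologicalClosure.completeSpace_coe
  have hmemV : ∀ y : H, c y ∈ V := fun y => ⟨y, rfl⟩
  have hmemVb : ∀ y : H, c y ∈ Vb := fun y => V.le_topologicalClosure (hmemV y)
  -- choose preimages
  let pre : V → H := fun v => (LinearMap.mem_range.mp v.2).choose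
  have hpre : ∀ v : V, c (pre v) = (v : H) := fun v => (LinearMap.mem_range.mp v.2).choose_spec
  have hphi_eq : ∀ (v : V) (y : H), c y = (v : H) → m (pre v) = m y :=
    fun v y h => hwd _ _ (by rw [hpre v, h])
  let φ : V →ₗ[ℂ] H :=
    { toFun := fun v => m (pre v)
      map_add' := by
        intro u v
        have h : c (pre u + pre v) = ((u + v : V) : H) := by
          rw [map_add, hpre u, hpre v]; rfl
        show m (pre (u + v)) = m (pre u) + m (pre v)
        rw [show m (pre (u + v)) = m (pre u + pre v) from hphi_eq _ _ h, map_add]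
      map_smul' := by
        intro a u
        have h : c (a • pre u) = ((a • u : V) : H) := by
          rw [map_smul, hpre u]; rfl
        show m (pre (a • u)) = a • m (pre u)
        rw [show m (pre (a • u)) = m (a • pre u) from hphi_eq _ _ h, map_smul] }
  have hφ_cy : ∀ y : H, φ ⟨c y, hmemV y⟩ = m y := fun y => hphi_eq _ y rfl
  have hφ_bound : ∀ v : V, ‖φ v‖ ≤ 1 * ‖v‖ := by
    intro v
    have : ‖m (pre v)‖ ≤ ‖c (pre v)‖ := hbound _
    rw [hpre v] at this
    show ‖m (pre v)‖ ≤ 1 * ‖v‖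
    simpa using this
  let f : V →L[ℂ] H := φ.mkContinuous 1 hφ_bound
  -- inclusion of V into its closure
  let e₀ : V →ₗ[ℂ] Vb := Submodule.inclusion V.le_topologicalClosure
  let e : V →L[ℂ] Vb := e₀.mkContinuous 1 (fun v => by simp [e₀])
  have he_iso : Isometry e := AddMonoidHomClass.isometry_of_norm e (fun v => rfl)
  have he_dense : DenseRange e := by
    intro u
    have hu : (u : H) ∈ closure (V : Set H) := u.2
    rw [mem_closure_iff_seq_limit] at hu
    obtain ⟨x, hxV, hxlim⟩ := hu
    rw [mem_closure_iff_seq_limit]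
    refine ⟨fun n => e ⟨x n, hxV n⟩, fun n => ⟨_, rfl⟩, ?_⟩
    rw [tendsto_subtype_rng]
    exact hxlim
  let sb : Vb →L[ℂ] H := f.extend e
  have hsb : ∀ v : V, sb (e v) = f v := fun v => ContinuousLinearMap.extend_eq f he_dense he_iso.isUniformInducing v
  have hsb_cy : ∀ y : H, sb ⟨c y, hmemVb y⟩ = m y := by
    intro y
    have h1 : e ⟨c y, hmemV y⟩ = ⟨c y, hmemVb y⟩ := rfl
    rw [← h1, hsb]
    exact hφ_cy y
  -- the orthogonal projection
  let P : H →L[ℂ] Vb := Submodule.orthogonalProjectionOnto Vb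
  have hPcy : ∀ y : H, P (c y) = ⟨c y, hmemVb y⟩ :=
    fun y => Submodule.orthogonalProjectionOnto_mem_subspace_eq_self (⟨c y, hmemVb y⟩ : Vb)
  -- kernel facts
  have hperp_iff : ∀ k : H, k ∈ Vbᗮ ↔ c k = 0 := by
    intro k
    constructor
    · intro hk
      have : ∀ y : H, ⟪y, c k⟫ = 0 := by
        intro y
        rw [← sa_inner_move hc]
        exact (Submodule.mem_orthogonal Vb k).mp hk (c y) (hmemVb y)
      have := this (c k)
      rwa [inner_self_eq_zero] at this
    · intro hk
      rw [hVb, Submodule.mem_orthogonal]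
      intro u hu
      have hclosed : IsClosed {u : H | ⟪u, k⟫ = 0} := by
        have : Continuous fun u : H => ⟪u, k⟫ := by
          exact (continuous_id.inner continuous_const)
        exact isClosed_eq this continuous_const
      have hsubset : (V : Set H) ⊆ {u : H | ⟪u, k⟫ = 0} := by
        rintro _ ⟨y, rfl⟩
        show ⟪c y, k⟫ = 0
        rw [sa_inner_move hc, hk, inner_zero_right]
      have : (Vb : Set H) ⊆ {u : H | ⟪u, k⟫ = 0} := by
        have := hclosed.closure_subset_iff.mpr hsubset
        intro z hz
        exact this hz
      exact this hu
  have hPk : ∀ k : H, c k = 0 → P k = 0 := by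
    intro k hk
    exact Submodule.orthogonalProjectionOnto_apply_of_mem_orthogonal ((hperp_iff k).mpr hk)
  -- define s
  let s : H →L[ℂ] H := sb.comp P + (ContinuousLinearMap.id ℂ H - Vb.subtypeL.comp P)
  have hs_apply : ∀ x : H, s x = sb (P x) + (x - (P x : H)) := fun x => rfl
  have hs_cy : ∀ y : H, s (c y) = m y := by
    intro y
    rw [hs_apply, hPcy y, hsb_cy y]
    simp
  have hs_k : ∀ k : H, c k = 0 → s k = k := by
    intro k hk
    rw [hs_apply, hPk k hk]
    simp
  -- range of sb lies in Vb
  have hmemVb_m : ∀ y : H, m y ∈ Vb := by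
    intro y
    haveI : CompleteSpace Vb := V.isClosed_topologicalClosure.completeSpace_coe
    rw [← Submodule.orthogonal_orthogonal Vb, Submodule.mem_orthogonal]
    intro k hk
    have hck : c k = 0 := (hperp_iff k).mp hk
    rw [← sa_inner_move hm, hker k hck, inner_zero_left]
  have hsb_mem : ∀ u : Vb, sb u ∈ Vb := by
    have hclosed : IsClosed {u : Vb | sb u ∈ Vb} :=
      IsClosed.preimage sb.continuous V.isClosed_topologicalClosure
    intro u
    refine he_dense.induction_on u hclosed ?_
    intro v
    show sb (e v) ∈ Vb
    rw [hsb v]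
    show φ v ∈ Vb
    rw [show φ v = m (pre v) from rfl]
    exact hmemVb_m _
  -- the master extensionality principle
  have key : ∀ f g : H →L[ℂ] H, (∀ y : H, f (c y) = g (c y)) →
      (∀ k : H, c k = 0 → f k = g k) → f = g := by
    intro f g h1 h2
    ext x
    have hsplit : x = (P x : H) + (x - (P x : H)) := by abel
    have hx2 : (x - (P x : H)) ∈ Vbᗮ := Submodule.sub_starProjection_mem_orthogonal x
    have hcx2 : c (x - (P x : H)) = 0 := (hperp_iff _).mp hx2
    have hfg1 : f (P x : H) = g (P x : H) := by
      have hclosed : IsClosed {z : H | f z = g z} := isClosed_eq f.continuous g.continuous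
      have hsubset : (V : Set H) ⊆ {z : H | f z = g z} := by
        rintro _ ⟨y, rfl⟩
        exact h1 y
      have hsub2 : (Vb : Set H) ⊆ {z : H | f z = g z} :=
        fun z hz => hclosed.closure_subset_iff.mpr hsubset hz
      exact hsub2 (P x).2
    calc f x = f ((P x : H) + (x - (P x : H))) := by rw [← hsplit]
      _ = f (P x : H) + f (x - (P x : H)) := map_add f _ _
      _ = g (P x : H) + g (x - (P x : H)) := by rw [hfg1, h2 _ hcx2]
      _ = g ((P x : H) + (x - (P x : H))) := (map_add g _ _).symm
      _ = g x := by rw [← hsplit]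
  -- now verify all the required properties of s
  have hsc : s * c = m := by
    ext y
    exact hs_cy y
  have hcs : c * s = m := by
    apply key
    · intro y
      show c (s (c y)) = m (c y)
      rw [hs_cy y]
      calc c (m y) = (c * m) y := rfl
        _ = (m * c) y := by rw [hcm]
        _ = m (c y) := rfl
    · intro k hk
      show c (s k) = m k
      rw [hs_k k hk, hk, hker k hk]
  have hs_sa : IsSelfAdjoint s := by
    have hstar_c : star s * c = m := by
      calc star s * c = star s * star c := by rw [hc]
        _ = star (c * s) := (star_mul _ _).symm
        _ = star m := by rw [hcs]
        _ = m := hm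
    have : star s = s := by
      apply key
      · intro y
        calc (star s) (c y) = (star s * c) y := rfl
          _ = m y := by rw [hstar_c]
          _ = s (c y) := (hs_cy y).symm
      · intro k hk
        have hkperp : k ∈ Vbᗮ := (hperp_iff k).mpr hk
        have hinner : ∀ x : H, ⟪(star s) k, x⟫ = ⟪k, x⟫ := by
          intro x
          rw [ContinuousLinearMap.star_eq_adjoint, ContinuousLinearMap.adjoint_inner_left]
          rw [hs_apply x, inner_add_right, inner_sub_right]
          have h1 : ⟪k, (sb (P x))⟫ = 0 :=
            (Submodule.mem_orthogonal' Vb k).mp hkperp _ (hsb_mem (P x))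
          have h2 : ⟪k, ((P x : H))⟫ = 0 :=
            (Submodule.mem_orthogonal' Vb k).mp hkperp _ (P x).2
          rw [h1, h2]
          ring
        rw [hs_k k hk]
        exact ext_inner_right ℂ hinner
    exact this
  have hsm : s * m = c - c * (c * c) := by
    apply key
    · intro y
      show s (m (c y)) = (c - c * (c * c)) (c y)
      have h1 : m (c y) = c (m y) := by
        calc m (c y) = (m * c) y := rfl
          _ = (c * m) y := by rw [hcm]
          _ = c (m y) := rfl
      rw [h1, hs_cy (m y)]
      calc m (m y) = (m * m) y := rfl
        _ = (c * c - c * c * (c * c)) y := by rw [hm2]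
        _ = (c - c * (c * c)) (c y) := by
            simp only [ContinuousLinearMap.sub_apply, ContinuousLinearMap.mul_apply]
    · intro k hk
      show s (m k) = (c - c * (c * c)) k
      rw [hker k hk]
      simp [ContinuousLinearMap.sub_apply, ContinuousLinearMap.mul_apply, hk]
  have hss : s * s = 1 - c * c := by
    apply key
    · intro y
      show s (s (c y)) = (1 - c * c) (c y)
      rw [hs_cy y]
      calc s (m y) = (s * m) y := rfl
        _ = (c - c * (c * c)) y := by rw [hsm]
        _ = (1 - c * c) (c y) := by
            simp only [ContinuousLinearMap.sub_apply, ContinuousLinearMap.mul_apply,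
              ContinuousLinearMap.one_apply]
    · intro k hk
      show s (s k) = (1 - c * c) k
      rw [hs_k k hk, hs_k k hk]
      simp [ContinuousLinearMap.sub_apply, ContinuousLinearMap.mul_apply, hk]
  refine ⟨s, hs_sa, hss, hsc, hcs, ?_⟩
  intro T hTc hTm
  apply key
  · intro y
    show T (s (c y)) = s (T (c y))
    rw [hs_cy y]
    have h1 : T (c y) = c (T y) := by
      calc T (c y) = (T * c) y := rfl
        _ = (c * T) y := by rw [hTc]
        _ = c (T y) := rfl
    rw [h1, hs_cy (T y)]
    calc T (m y) = (T * m) y := rfl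
      _ = (m * T) y := by rw [hTm]
      _ = m (T y) := rfl
  · intro k hk
    show T (s k) = s (T k)
    have hcTk : c (T k) = 0 := by
      calc c (T k) = (c * T) k := rfl
        _ = (T * c) k := by rw [hTc]
        _ = T (c k) := rfl
        _ = 0 := by rw [hk, map_zero]
    rw [hs_k k hk, hs_k _ hcTk]


/-- A (self-adjoint idempotent) projection in `B(H)`. -/
def IsProjectionOp (P : H →L[ℂ] H) : Prop := IsSelfAdjoint P ∧ P * P = P

/-- Proposition 2.10 (sufficiency): let `M` be a von Neumann algebra, `A ∈ M` with
`0 ≤ A ≤ 2I` and dense range, and suppose there is a unitary `U ∈ M` with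
`U A U* = 2I - A`.  Then `A` is the sum of two projections in `M`. -/
theorem stmt_11 (M : VonNeumannAlgebra H) (A : H →L[ℂ] H) (hAM : A ∈ M)
    (hA0 : A.IsPositive) (hA2 : ((2 : ℂ) • (1 : H →L[ℂ] H) - A).IsPositive)
    (hrange : Dense (Set.range A))
    (U : H →L[ℂ] H) (hUM : U ∈ M) (hU1 : star U * U = 1) (hU2 : U * star U = 1)
    (hUAU : U * A * star U = (2 : ℂ) • (1 : H →L[ℂ] H) - A) :
    ∃ P Q : H →L[ℂ] H, P ∈ M ∧ Q ∈ M ∧ IsProjectionOp P ∧ IsProjectionOp Q ∧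
      A = P + Q := by
  classical
  have sqrt_cont : ∀ (x : H →L[ℂ] H), ContinuousOn Real.sqrt (spectrum ℝ x) :=
    fun x => Real.continuous_sqrt.continuousOn
  have hA_sa : IsSelfAdjoint A := hA0.isSelfAdjoint
  have hA_nonneg : (0 : H →L[ℂ] H) ≤ A := (ContinuousLinearMap.nonneg_iff_isPositive A).mpr hA0
  have h2 : (2 : ℂ) • (1 : H →L[ℂ] H) = 1 + 1 := two_smul ℂ (1 : H →L[ℂ] H)
  set A' : H →L[ℂ] H := 1 + 1 - A with hA'def
  have hA'_nonneg : (0 : H →L[ℂ] H) ≤ A' := by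
    rw [hA'def, ← h2]
    exact (ContinuousLinearMap.nonneg_iff_isPositive _).mpr hA2
  have hA'_sa : IsSelfAdjoint A' := by
    rw [hA'def, IsSelfAdjoint]
    simp [star_sub, star_add, hA_sa.star_eq]
  obtain ⟨B, hBdef⟩ : ∃ x : H →L[ℂ] H, x = A - 1 := ⟨_, rfl⟩
  have hB_sa : IsSelfAdjoint B := by
    rw [hBdef, IsSelfAdjoint]
    simp [star_sub, hA_sa.star_eq]
  -- basic commutation from the hypothesis
  have hUA : U * A = (1 + 1 - A) * U := by
    calc U * A = U * A * (star U * U) := by rw [hU1, mul_one]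
      _ = (U * A * star U) * U := by rw [mul_assoc (U * A) (star U) U]
      _ = ((2 : ℂ) • (1 : H →L[ℂ] H) - A) * U := by rw [hUAU]
      _ = (1 + 1 - A) * U := by rw [h2]
  have hUB : U * B = -(B * U) := by
    have h1 : U * B = U * A - U := by rw [hBdef, mul_sub, mul_one]
    rw [h1, hUA, hBdef]
    noncomm_ring
  have hUstarB : star U * B = -(B * star U) := by
    have h := congrArg star hUB
    rw [star_mul, star_neg, star_mul, hB_sa.star_eq] at h
    rw [h, neg_neg]
  -- Z = U^2 and its relations
  obtain ⟨Z, hZdef⟩ : ∃ x : H →L[ℂ] H, x = U * U := ⟨_, rfl⟩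
  have hZs : star Z = star U * star U := by rw [hZdef, star_mul]
  have hZZs : Z * star Z = 1 := by
    rw [hZs, hZdef, show U * U * (star U * star U) = U * (U * star U) * star U by noncomm_ring,
      hU2, mul_one, hU2]
  have hZsZ : star Z * Z = 1 := by
    rw [hZs, hZdef, show star U * star U * (U * U) = star U * (star U * U) * U by noncomm_ring,
      hU1, mul_one, hU1]
  have hZB : Z * B = B * Z := by
    calc Z * B = U * (U * B) := by rw [hZdef, mul_assoc]
      _ = U * (-(B * U)) := by rw [hUB]
      _ = -((U * B) * U) := by rw [mul_neg, mul_assoc]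
      _ = -((-(B * U)) * U) := by rw [hUB]
      _ = (B * U) * U := by rw [neg_mul, neg_neg]
      _ = B * Z := by rw [hZdef, mul_assoc]
  have hZsB : star Z * B = B * star Z := by
    calc star Z * B = star U * (star U * B) := by rw [hZs, mul_assoc]
      _ = star U * (-(B * star U)) := by rw [hUstarB]
      _ = -((star U * B) * star U) := by rw [mul_neg, mul_assoc]
      _ = -((-(B * star U)) * star U) := by rw [hUstarB]
      _ = (B * star U) * star U := by rw [neg_mul, neg_neg]
      _ = B * star Z := by rw [hZs, mul_assoc]
  have hZU : Z * U = U * Z := by rw [hZdef]; noncomm_ring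
  have hZsU : star Z * U = U * star Z := by
    rw [hZs]
    calc star U * star U * U = star U * (star U * U) := by rw [mul_assoc]
      _ = star U := by rw [hU1, mul_one]
      _ = (U * star U) * star U := by rw [hU2, one_mul]
      _ = U * (star U * star U) := by rw [mul_assoc]
  -- ca and c
  obtain ⟨ca, hcadef⟩ : ∃ x : H →L[ℂ] H, x = (4:ℝ)⁻¹ • (1 + 1 + Z + star Z) := ⟨_, rfl⟩
  have hca_sa : IsSelfAdjoint ca := by
    rw [hcadef, IsSelfAdjoint]
    simp [star_smul, star_add, star_star]
    abel
  have hca_nonneg : (0 : H →L[ℂ] H) ≤ ca := by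
    have hprod : (1 + Z) * star (1 + Z) = 1 + 1 + Z + star Z := by
      have h1 : star ((1:H →L[ℂ] H) + Z) = 1 + star Z := by simp [star_add]
      rw [h1, show ((1:H →L[ℂ] H) + Z) * (1 + star Z) = 1 + star Z + Z + Z * star Z by
        noncomm_ring, hZZs]
      abel
    rw [hcadef, ← hprod]
    exact smul_nonneg (by norm_num) (mul_star_self_nonneg _)
  have hca_comm : ∀ T : H →L[ℂ] H, T * Z = Z * T → T * star Z = star Z * T →
      T * ca = ca * T := by
    intro T h1 h2'
    rw [hcadef, mul_smul_comm, smul_mul_assoc]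
    congr 1
    simp only [mul_add, add_mul, mul_one, one_mul, h1, h2']
  obtain ⟨c, hcdef⟩ : ∃ x : H →L[ℂ] H, x = cfc Real.sqrt ca := ⟨_, rfl⟩
  have hc_sa : IsSelfAdjoint c := by rw [hcdef]; exact cfc_predicate Real.sqrt ca
  have hc2 : c * c = ca := by
    rw [hcdef, ← cfc_mul Real.sqrt Real.sqrt ca (sqrt_cont ca) (sqrt_cont ca)]
    rw [cfc_congr (g := fun x : ℝ => x) (fun x hx =>
      Real.mul_self_sqrt (spectrum_nonneg_of_nonneg hca_nonneg hx))]
    exact cfc_id ℝ ca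
  -- m
  obtain ⟨m, hmdef⟩ : ∃ x : H →L[ℂ] H, x = (4:ℝ)⁻¹ • (Complex.I • (star Z - Z)) := ⟨_, rfl⟩
  have hm_sa : IsSelfAdjoint m := by
    have hstar : star (Complex.I • (star Z - Z)) = Complex.I • (star Z - Z) := by
      rw [star_smul, star_sub, star_star, Complex.star_def, Complex.conj_I, neg_smul,
        ← smul_neg, neg_sub]
    rw [hmdef, IsSelfAdjoint, star_smul, star_trivial, hstar]
  have hm_comm : ∀ T : H →L[ℂ] H, T * Z = Z * T → T * star Z = star Z * T →
      T * m = m * T := by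
    intro T h1 h2'
    rw [hmdef]
    rw [mul_smul_comm, smul_mul_assoc]
    congr 1
    rw [mul_smul_comm, smul_mul_assoc]
    congr 1
    simp only [mul_sub, sub_mul, h1, h2']
  -- commutation of c with the players
  have hUZcomm : U * Z = Z * U := hZU.symm
  have hUZscomm : U * star Z = star Z * U := hZsU.symm
  have hBZcomm : B * Z = Z * B := hZB.symm
  have hBZscomm : B * star Z = star Z * B := hZsB.symm
  have hUca : U * ca = ca * U := hca_comm U hUZcomm hUZscomm
  have hBca : B * ca = ca * B := hca_comm B hBZcomm hBZscomm
  have hUc : U * c = c * U := by rw [hcdef]; exact commute_cfc' ca U hca_sa hUca Real.sqrt (sqrt_cont ca)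
  have hBc : B * c = c * B := by rw [hcdef]; exact commute_cfc' ca B hca_sa hBca Real.sqrt (sqrt_cont ca)
  have hUm : U * m = m * U := hm_comm U hUZcomm hUZscomm
  have hBm : B * m = m * B := hm_comm B hBZcomm hBZscomm
  have hZca : Z * ca = ca * Z := hca_comm Z rfl (by rw [hZZs, hZsZ])
  have hZsca : star Z * ca = ca * star Z := hca_comm (star Z) (by rw [hZZs, hZsZ]) rfl
  have hZc : Z * c = c * Z := by rw [hcdef]; exact commute_cfc' ca Z hca_sa hZca Real.sqrt (sqrt_cont ca)
  have hZsc : star Z * c = c * star Z := by rw [hcdef]; exact commute_cfc' ca (star Z) hca_sa hZsca Real.sqrt (sqrt_cont ca)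
  have hcm : c * m = m * c := hm_comm c hZc.symm hZsc.symm
  -- the m^2 identity
  have hm2 : m * m = c * c - c * c * (c * c) := by
    have hww : (1 + 1 + Z + star Z) * (1 + 1 + Z + star Z)
        = (1+1+1+1) + (Z+Z+Z+Z) + (star Z+star Z+star Z+star Z)
          + (Z*Z + star Z*star Z) + (Z*star Z + star Z*Z) := by noncomm_ring
    rw [hc2, hmdef, hcadef, smul_mul_smul_comm, smul_mul_smul_comm, Complex.I_mul_I,
      neg_smul, one_smul,
      show (star Z - Z) * (star Z - Z)
          = star Z * star Z - star Z * Z - Z * star Z + Z * Z from by noncomm_ring,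
      smul_mul_smul_comm, hww, hZZs, hZsZ]
    module
  -- obtain s
  obtain ⟨s, hs_sa, hss, hsc, hcs, hscomm⟩ := exists_partner c m hc_sa hm_sa hcm hm2
  have hUs : U * s = s * U := hscomm U hUc hUm
  have hBs : B * s = s * B := hscomm B hBc hBm
  -- W
  obtain ⟨W, hWdef⟩ : ∃ x : H →L[ℂ] H, x = c + Complex.I • s := ⟨_, rfl⟩
  have hstarW : star W = c - Complex.I • s := by
    rw [hWdef]
    simp [star_add, star_smul, Complex.star_def, Complex.conj_I, hc_sa.star_eq, hs_sa.star_eq,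
      sub_eq_add_neg, neg_smul]
  have hIm : Complex.I • m = (4:ℝ)⁻¹ • (Z - star Z) := by
    rw [hmdef, smul_comm Complex.I ((4:ℝ)⁻¹), smul_smul, Complex.I_mul_I, neg_smul, one_smul,
      neg_sub]
  have hWsq : W * W = Z := by
    have hexp : W * W = (c * c - s * s) + Complex.I • (c * s + s * c) := by
      rw [hWdef]
      rw [mul_add, add_mul, add_mul, mul_smul_comm, smul_mul_assoc, smul_mul_smul_comm,
        Complex.I_mul_I, neg_smul, one_smul, smul_add]
      abel
    rw [hexp, hss, hcs, hsc, hc2, smul_add, hIm, hcadef]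
    module
  have hWsW : star W * W = 1 := by
    have hexp : star W * W = (c * c + s * s) + Complex.I • (c * s - s * c) := by
      rw [hstarW, hWdef]
      rw [sub_mul, mul_add, mul_add, mul_smul_comm, smul_mul_assoc, smul_mul_smul_comm,
        Complex.I_mul_I, neg_smul, one_smul, smul_sub]
      abel
    rw [hexp, hss, hcs, hsc, hc2, sub_self, smul_zero, add_zero]
    abel
  have hWWs : W * star W = 1 := by
    have hexp : W * star W = (c * c + s * s) + Complex.I • (s * c - c * s) := by
      rw [hstarW, hWdef]
      rw [mul_sub, add_mul, add_mul, mul_smul_comm, smul_mul_assoc, smul_mul_smul_comm,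
        Complex.I_mul_I, neg_smul, one_smul, smul_sub]
      abel
    rw [hexp, hss, hcs, hsc, hc2, sub_self, smul_zero, add_zero]
    abel
  have hUW : U * W = W * U := by
    rw [hWdef, mul_add, add_mul, hUc, mul_smul_comm, smul_mul_assoc, hUs]
  have hBW : B * W = W * B := by
    rw [hWdef, mul_add, add_mul, hBc, mul_smul_comm, smul_mul_assoc, hBs]
  have hUstarW : U * star W = star W * U := by
    rw [hstarW, mul_sub, sub_mul, hUc, mul_smul_comm, smul_mul_assoc, hUs]
  have hBstarW : B * star W = star W * B := by
    rw [hstarW, mul_sub, sub_mul, hBc, mul_smul_comm, smul_mul_assoc, hBs]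
  -- dsq and D
  obtain ⟨dsq, hdsqdef⟩ : ∃ x : H →L[ℂ] H, x = 1 - B * B := ⟨_, rfl⟩
  have hdsq_sa : IsSelfAdjoint dsq := by
    rw [hdsqdef, IsSelfAdjoint]
    simp [star_sub, star_mul, hB_sa.star_eq]
  obtain ⟨a1, ha1def⟩ : ∃ x : H →L[ℂ] H, x = cfc Real.sqrt A := ⟨_, rfl⟩
  obtain ⟨a2, ha2def⟩ : ∃ x : H →L[ℂ] H, x = cfc Real.sqrt A' := ⟨_, rfl⟩
  have ha1_sa : IsSelfAdjoint a1 := by rw [ha1def]; exact cfc_predicate Real.sqrt A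
  have ha2_sa : IsSelfAdjoint a2 := by rw [ha2def]; exact cfc_predicate Real.sqrt A'
  have ha1_sq : a1 * a1 = A := by
    rw [ha1def, ← cfc_mul Real.sqrt Real.sqrt A (sqrt_cont A) (sqrt_cont A)]
    rw [cfc_congr (g := fun x : ℝ => x) (fun x hx =>
      Real.mul_self_sqrt (spectrum_nonneg_of_nonneg hA_nonneg hx))]
    exact cfc_id ℝ A
  have ha2_sq : a2 * a2 = A' := by
    rw [ha2def, ← cfc_mul Real.sqrt Real.sqrt A' (sqrt_cont A') (sqrt_cont A')]
    rw [cfc_congr (g := fun x : ℝ => x) (fun x hx =>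
      Real.mul_self_sqrt (spectrum_nonneg_of_nonneg hA'_nonneg hx))]
    exact cfc_id ℝ A'
  have hAA' : A' * A = A * A' := by rw [hA'def]; noncomm_ring
  have hA'a1 : A' * a1 = a1 * A' := by rw [ha1def]; exact commute_cfc' A A' hA_sa hAA' Real.sqrt (sqrt_cont A)
  have ha1A' : a1 * A' = A' * a1 := hA'a1.symm
  have ha1a2 : a1 * a2 = a2 * a1 := by rw [ha2def]; exact commute_cfc' A' a1 hA'_sa ha1A' Real.sqrt (sqrt_cont A')
  have hdsq_eq : dsq = (a1 * a2) * star (a1 * a2) := by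
    have h1 : star (a1 * a2) = a2 * a1 := by rw [star_mul, ha1_sa.star_eq, ha2_sa.star_eq]
    have h2 : (a1 * a2) * (a2 * a1) = A' * A := by
      calc (a1 * a2) * (a2 * a1) = a1 * (a2 * a2) * a1 := by noncomm_ring
        _ = a1 * A' * a1 := by rw [ha2_sq]
        _ = A' * a1 * a1 := by rw [ha1A']
        _ = A' * (a1 * a1) := by rw [mul_assoc]
        _ = A' * A := by rw [ha1_sq]
    rw [h1, h2, hdsqdef, hBdef, hA'def]
    noncomm_ring
  have hdsq_nonneg : (0 : H →L[ℂ] H) ≤ dsq := hdsq_eq ▸ mul_star_self_nonneg _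
  obtain ⟨D, hDdef⟩ : ∃ x : H →L[ℂ] H, x = cfc Real.sqrt dsq := ⟨_, rfl⟩
  have hD_sa : IsSelfAdjoint D := by rw [hDdef]; exact cfc_predicate Real.sqrt dsq
  have hD_sq : D * D = dsq := by
    rw [hDdef, ← cfc_mul Real.sqrt Real.sqrt dsq (sqrt_cont dsq) (sqrt_cont dsq)]
    rw [cfc_congr (g := fun x : ℝ => x) (fun x hx =>
      Real.mul_self_sqrt (spectrum_nonneg_of_nonneg hdsq_nonneg hx))]
    exact cfc_id ℝ dsq
  have hBdsq : B * dsq = dsq * B := by rw [hdsqdef]; noncomm_ring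
  have hUdsq : U * dsq = dsq * U := by
    rw [hdsqdef, mul_sub, sub_mul, mul_one, one_mul]
    congr 1
    calc U * (B * B) = (U * B) * B := by rw [mul_assoc]
      _ = (-(B * U)) * B := by rw [hUB]
      _ = -(B * (U * B)) := by rw [neg_mul, mul_assoc]
      _ = -(B * (-(B * U))) := by rw [hUB]
      _ = B * (B * U) := by rw [mul_neg, neg_neg]
      _ = B * B * U := by rw [mul_assoc]
  have hcdsq : c * dsq = dsq * c := by
    rw [hdsqdef, mul_sub, sub_mul, mul_one, one_mul]
    congr 1
    calc c * (B * B) = (c * B) * B := by rw [mul_assoc]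
      _ = (B * c) * B := by rw [hBc]
      _ = B * (c * B) := by rw [mul_assoc]
      _ = B * (B * c) := by rw [hBc]
      _ = B * B * c := by rw [mul_assoc]
  have hZdsq : Z * dsq = dsq * Z := by
    rw [hdsqdef, mul_sub, sub_mul, mul_one, one_mul]
    congr 1
    calc Z * (B * B) = (Z * B) * B := by rw [mul_assoc]
      _ = (B * Z) * B := by rw [hZB]
      _ = B * (Z * B) := by rw [mul_assoc]
      _ = B * (B * Z) := by rw [hZB]
      _ = B * B * Z := by rw [mul_assoc]
  have hZsdsq : star Z * dsq = dsq * star Z := by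
    rw [hdsqdef, mul_sub, sub_mul, mul_one, one_mul]
    congr 1
    calc star Z * (B * B) = (star Z * B) * B := by rw [mul_assoc]
      _ = (B * star Z) * B := by rw [hZsB]
      _ = B * (star Z * B) := by rw [mul_assoc]
      _ = B * (B * star Z) := by rw [hZsB]
      _ = B * B * star Z := by rw [mul_assoc]
  have hBD : B * D = D * B := by rw [hDdef]; exact commute_cfc' dsq B hdsq_sa hBdsq Real.sqrt (sqrt_cont dsq)
  have hUD : U * D = D * U := by rw [hDdef]; exact commute_cfc' dsq U hdsq_sa hUdsq Real.sqrt (sqrt_cont dsq)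
  have hcD : c * D = D * c := by rw [hDdef]; exact commute_cfc' dsq c hdsq_sa hcdsq Real.sqrt (sqrt_cont dsq)
  have hZD : Z * D = D * Z := by rw [hDdef]; exact commute_cfc' dsq Z hdsq_sa hZdsq Real.sqrt (sqrt_cont dsq)
  have hZsD : star Z * D = D * star Z := by rw [hDdef]; exact commute_cfc' dsq (star Z) hdsq_sa hZsdsq Real.sqrt (sqrt_cont dsq)
  have hDm : D * m = m * D := hm_comm D hZD.symm hZsD.symm
  have hDs : D * s = s * D := hscomm D hcD.symm hDm
  have hsD : s * D = D * s := hDs.symm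
  have hDW : D * W = W * D := by
    rw [hWdef, mul_add, add_mul, hcD.symm, mul_smul_comm, smul_mul_assoc, hDs]
  have hDstarW : D * star W = star W * D := by
    rw [hstarW, mul_sub, sub_mul, hcD.symm, mul_smul_comm, smul_mul_assoc, hDs]
  -- J and C
  obtain ⟨J, hJdef⟩ : ∃ x : H →L[ℂ] H, x = star W * U := ⟨_, rfl⟩
  have hJJ : J * J = 1 := by
    calc J * J = star W * (U * star W) * U := by rw [hJdef]; noncomm_ring
      _ = star W * (star W * U) * U := by rw [hUstarW]
      _ = (star W * star W) * (U * U) := by noncomm_ring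
      _ = star (W * W) * (U * U) := by rw [star_mul]
      _ = star Z * Z := by rw [hWsq, hZdef]
      _ = 1 := hZsZ
  have hJsJ : star J * J = 1 := by
    calc star J * J = (star U * W) * (star W * U) := by rw [hJdef, star_mul, star_star]
      _ = star U * (W * star W) * U := by noncomm_ring
      _ = star U * U := by rw [hWWs, mul_one]
      _ = 1 := hU1
  have hJ_sa : IsSelfAdjoint J := by
    rw [IsSelfAdjoint]
    calc star J = star J * (J * J) := by rw [hJJ, mul_one]
      _ = (star J * J) * J := by rw [mul_assoc]
      _ = J := by rw [hJsJ, one_mul]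
  have hJB : J * B = -(B * J) := by
    calc J * B = star W * (U * B) := by rw [hJdef, mul_assoc]
      _ = star W * (-(B * U)) := by rw [hUB]
      _ = -((star W * B) * U) := by rw [mul_neg, mul_assoc]
      _ = -((B * star W) * U) := by rw [hBstarW]
      _ = -(B * J) := by rw [hJdef, mul_assoc]
  have hJD : J * D = D * J := by
    calc J * D = star W * (U * D) := by rw [hJdef, mul_assoc]
      _ = star W * (D * U) := by rw [hUD]
      _ = (star W * D) * U := by rw [mul_assoc]
      _ = (D * star W) * U := by rw [hDstarW]
      _ = D * J := by rw [hJdef, mul_assoc]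
  obtain ⟨C, hCdef⟩ : ∃ x : H →L[ℂ] H, x = J * D := ⟨_, rfl⟩
  have hC_sa : IsSelfAdjoint C := by
    rw [IsSelfAdjoint, hCdef, star_mul, hD_sa.star_eq, hJ_sa.star_eq, ← hJD]
  have hC2 : C * C = dsq := by
    calc C * C = J * (D * J) * D := by rw [hCdef]; noncomm_ring
      _ = J * (J * D) * D := by rw [hJD]
      _ = (J * J) * (D * D) := by noncomm_ring
      _ = dsq := by rw [hJJ, hD_sq, one_mul]
  have hCB : C * B = -(B * C) := by
    calc C * B = J * (D * B) := by rw [hCdef, mul_assoc]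
      _ = J * (B * D) := by rw [hBD]
      _ = (J * B) * D := by rw [mul_assoc]
      _ = (-(B * J)) * D := by rw [hJB]
      _ = -(B * (J * D)) := by rw [neg_mul, mul_assoc]
      _ = -(B * C) := by rw [hCdef]
  -- the projections
  obtain ⟨P, hPdef⟩ : ∃ x : H →L[ℂ] H, x = (2:ℝ)⁻¹ • (1 + B + C) := ⟨_, rfl⟩
  obtain ⟨Q, hQdef⟩ : ∃ x : H →L[ℂ] H, x = (2:ℝ)⁻¹ • (1 + B - C) := ⟨_, rfl⟩
  have hP_sa : IsSelfAdjoint P := by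
    rw [hPdef, IsSelfAdjoint]
    simp [star_smul, star_add, hB_sa.star_eq, hC_sa.star_eq]
  have hQ_sa : IsSelfAdjoint Q := by
    rw [hQdef, IsSelfAdjoint]
    simp [star_smul, star_add, star_sub, hB_sa.star_eq, hC_sa.star_eq]
  have hXX : (1 + B + C) * (1 + B + C) = ((1:H →L[ℂ] H) + B + C) + (1 + B + C) := by
    have h1 : (1 + B + C) * (1 + B + C)
        = 1 + (B + B) + (C + C) + (B*B + C*C) + (B*C + C*B) := by noncomm_ring
    rw [h1, hC2, hdsqdef, show C * B = -(B*C) from hCB]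
    abel
  have hYY : (1 + B - C) * (1 + B - C) = ((1:H →L[ℂ] H) + B - C) + (1 + B - C) := by
    have h1 : (1 + B - C) * (1 + B - C)
        = 1 + (B + B) - (C + C) + (B*B + C*C) - (B*C + C*B) := by noncomm_ring
    rw [h1, hC2, hdsqdef, show C * B = -(B*C) from hCB]
    abel
  have hPP : P * P = P := by
    rw [hPdef, smul_mul_smul_comm, hXX]
    module
  have hQQ : Q * Q = Q := by
    rw [hQdef, smul_mul_smul_comm, hYY]
    module
  have hsum : A = P + Q := by
    rw [hPdef, hQdef, hBdef]
    module
  -- memberships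
  have smul_memM : ∀ (t : ℂ) (x : H →L[ℂ] H), x ∈ M → t • x ∈ M := by
    intro t x hx
    have : t • x ∈ M.toStarSubalgebra := SMulMemClass.smul_mem t hx
    exact this
  have rsmul_memM : ∀ (r : ℝ) (x : H →L[ℂ] H), x ∈ M → r • x ∈ M := by
    intro r x hx
    rw [← algebraMap_smul ℂ r x]
    exact smul_memM _ x hx
  have memM_of_comm : ∀ x : H →L[ℂ] H,
      (∀ g : H →L[ℂ] H, (∀ y ∈ M, y * g = g * y) → g * x = x * g) → x ∈ M := by
    intro x hx
    have hmem : x ∈ Set.centralizer (Set.centralizer (M : Set (H →L[ℂ] H))) := by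
      rw [Set.mem_centralizer_iff]
      intro g hg
      exact hx g (fun y hy => Set.mem_centralizer_iff.mp hg y hy)
    rw [M.centralizer_centralizer] at hmem
    exact hmem
  have hBM : B ∈ M := by rw [hBdef]; exact sub_mem hAM (one_mem M)
  have hZM : Z ∈ M := by rw [hZdef]; exact mul_mem hUM hUM
  have hZsM : star Z ∈ M := star_mem hZM
  -- commutant elements commute with everything
  have hgB : ∀ g : H →L[ℂ] H, (∀ y ∈ M, y * g = g * y) → g * B = B * g := by
    intro g hg
    have h := hg A hAM
    rw [hBdef, mul_sub, sub_mul, mul_one, one_mul, h]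
  have hgZ : ∀ g : H →L[ℂ] H, (∀ y ∈ M, y * g = g * y) → g * Z = Z * g :=
    fun g hg => (hg Z hZM).symm
  have hgZs : ∀ g : H →L[ℂ] H, (∀ y ∈ M, y * g = g * y) → g * star Z = star Z * g :=
    fun g hg => (hg (star Z) hZsM).symm
  have hgdsq : ∀ g : H →L[ℂ] H, (∀ y ∈ M, y * g = g * y) → g * dsq = dsq * g := by
    intro g hg
    have hB' := hgB g hg
    rw [hdsqdef, mul_sub, sub_mul, mul_one, one_mul]
    congr 1
    calc g * (B * B) = (g * B) * B := by rw [mul_assoc]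
      _ = (B * g) * B := by rw [hB']
      _ = B * (g * B) := by rw [mul_assoc]
      _ = B * (B * g) := by rw [hB']
      _ = B * B * g := by rw [mul_assoc]
  have hgca : ∀ g : H →L[ℂ] H, (∀ y ∈ M, y * g = g * y) → g * ca = ca * g := by
    intro g hg
    exact hca_comm g (hgZ g hg) (hgZs g hg)
  have hDM : D ∈ M := memM_of_comm D (fun g hg => by
    rw [hDdef]; exact commute_cfc' dsq g hdsq_sa (hgdsq g hg) Real.sqrt (sqrt_cont dsq))
  have hcM : c ∈ M := memM_of_comm c (fun g hg => by
    rw [hcdef]; exact commute_cfc' ca g hca_sa (hgca g hg) Real.sqrt (sqrt_cont ca))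
  have hgc : ∀ g : H →L[ℂ] H, (∀ y ∈ M, y * g = g * y) → g * c = c * g := by
    intro g hg
    rw [hcdef]
    exact commute_cfc' ca g hca_sa (hgca g hg) Real.sqrt (sqrt_cont ca)
  have hgm : ∀ g : H →L[ℂ] H, (∀ y ∈ M, y * g = g * y) → g * m = m * g := by
    intro g hg
    exact hm_comm g (hgZ g hg) (hgZs g hg)
  have hsM : s ∈ M := memM_of_comm s (fun g hg => hscomm g (hgc g hg) (hgm g hg))
  have hWM : W ∈ M := by
    rw [hWdef]
    exact add_mem hcM (smul_memM Complex.I s hsM)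
  have hCM : C ∈ M := by
    rw [hCdef, hJdef]
    exact mul_mem (mul_mem (star_mem hWM) hUM) hDM
  have hPM : P ∈ M := by
    rw [hPdef]
    exact rsmul_memM _ _ (add_mem (add_mem (one_mem M) hBM) hCM)
  have hQM : Q ∈ M := by
    rw [hQdef]
    exact rsmul_memM _ _ (sub_mem (add_mem (one_mem M) hBM) hCM)
  exact ⟨P, Q, hPM, hQM, ⟨hP_sa, hPP⟩, ⟨hQ_sa, hQQ⟩, hsum⟩
end

section
/- Conversely: if A ∈ B(H)⁺, V is a partial isometry with V*V = R_A, and I = Σ_{j=1}^N E_j is a decomposition of the identity into mutually orthogonal nonzero projections with Σ_j E_j V A V* E_j = I (strong convergence if N = ∞), then setting W_j := E_j V A^{1/2} and P_j := W_j* W_j, each P_j is a projection equivalent to E_j and A = Σ_{j=1}^N P_j in the strong operator topology. -/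
open scoped InnerProductSpace

variable {H : Type*} [NormedAddCommGroup H] [InnerProductSpace ℂ H] [CompleteSpace H]

/-- Murray–von Neumann equivalence of projections in `B(H)`. -/
def MvNEquivOp (P Q : H →L[ℂ] H) : Prop := ∃ W : H →L[ℂ] H, star W * W = P ∧ W * star W = Q

/-- The range projection of an operator: the orthogonal projection onto the closure of
its range. -/
noncomputable def rangeProj (A : H →L[ℂ] H) : H →L[ℂ] H :=
  ((LinearMap.range (A : H →ₗ[ℂ] H)).topologicalClosure).subtypeL.comp
    (Submodule.orthogonalProjectionOnto ((LinearMap.range (A : H →ₗ[ℂ] H)).topologicalClosure))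

/-- Proposition 3.1, (i) ⇒ (ii): if `V` is a partial isometry with `V*V = R_A`, and
`I = Σ_j E_j` is a decomposition of the identity into mutually orthogonal nonzero
projections with `Σ_j E_j V A V* E_j = I` strongly, then, with `S = A^{1/2}` (the
positive square root of `A`) and `W_j := E_j V S`, each `P_j := W_j* W_j` is a
projection equivalent to `E_j` and `A = Σ_j P_j` strongly. -/
theorem stmt_13 {ι : Type*} [Countable ι]
    (A : H →L[ℂ] H) (hA : A.IsPositive)
    (S : H →L[ℂ] H) (hS : S.IsPositive) (hS2 : S * S = A)
    (V : H →L[ℂ] H) (hV : star V * V = rangeProj A)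
    (E : ι → (H →L[ℂ] H)) (hE : ∀ j, IsProjectionOp (E j)) (hEne : ∀ j, E j ≠ 0)
    (horth : ∀ i j, i ≠ j → E i * E j = 0)
    (hEsum : ∀ x : H, HasSum (fun j => E j x) x)
    (hdiag : ∀ x : H, HasSum (fun j => E j ((V * A * star V) (E j x))) x) :
    (∀ j, IsProjectionOp (star (E j * V * S) * (E j * V * S)) ∧
      MvNEquivOp (star (E j * V * S) * (E j * V * S)) (E j)) ∧
    (∀ x : H, HasSum (fun j => (star (E j * V * S) * (E j * V * S)) x) (A x)) := by
  have hSsa : IsSelfAdjoint S := hS.isSelfAdjoint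
  have hSsym := hS.1
  have hEj2 : ∀ j, E j * E j = E j := fun j => (hE j).2
  -- range projection fixes S x
  have hRS : ∀ x, rangeProj A (S x) = S x := by
    intro x
    have hmem : S x ∈ (LinearMap.range (A : H →ₗ[ℂ] H)).topologicalClosure := by
      rw [← Submodule.orthogonal_orthogonal_eq_closure]
      intro y hy
      have hSy : S y = 0 := by
        have h0 : ⟪A y, y⟫_ℂ = 0 := hy (A y) ⟨y, rfl⟩
        have h1 : ⟪S y, S y⟫_ℂ = 0 := by
          calc ⟪S y, S y⟫_ℂ = ⟪S (S y), y⟫_ℂ := (hSsym (S y) y).symm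
            _ = ⟪A y, y⟫_ℂ := by rw [← hS2]; rfl
            _ = 0 := h0
        simpa [inner_self_eq_zero] using h1
      rw [inner_eq_zero_symm]
      exact (hSsym x y).trans (by show ⟪x, S y⟫_ℂ = 0; rw [hSy, inner_zero_right])
    simp only [rangeProj, ContinuousLinearMap.coe_comp', Function.comp_apply,
      Submodule.subtypeL_apply]
    exact Submodule.starProjection_eq_self_iff.mpr hmem
  -- diagonal compression equals E j
  have hdiagop : ∀ j, E j * (V * A * star V) * E j = E j := by
    intro j
    ext x
    have h := (hdiag x).mapL (E j)
    have h2 : HasSum (fun k => E j (E k ((V * A * star V) (E k x))))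
        (E j (E j ((V * A * star V) (E j x)))) := by
      refine hasSum_single j ?_
      intro k hk
      have h0 : E j * E k = 0 := horth j k (Ne.symm hk)
      calc E j (E k ((V * A * star V) (E k x)))
          = (E j * E k) ((V * A * star V) (E k x)) := rfl
        _ = 0 := by rw [h0]; rfl
    have h3 : E j (E j ((V * A * star V) (E j x))) = E j x := h2.unique h
    calc (E j * (V * A * star V) * E j) x
        = E j ((V * A * star V) (E j x)) := rfl
      _ = (E j * E j) ((V * A * star V) (E j x)) := by rw [hEj2 j]
      _ = E j x := h3
  have hWstar : ∀ j, star (E j * V * S) = S * (star V * E j) := by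
    intro j
    simp [star_mul, hSsa.star_eq, (hE j).1.star_eq, mul_assoc]
  have hWW : ∀ j, (E j * V * S) * star (E j * V * S) = E j := by
    intro j
    rw [hWstar j]
    calc E j * V * S * (S * (star V * E j)) = E j * (V * A * star V) * E j := by
          rw [← hS2]; noncomm_ring
      _ = E j := hdiagop j
  have hEW : ∀ j, E j * (E j * V * S) = E j * V * S := by
    intro j
    calc E j * (E j * V * S) = (E j * E j) * V * S := by noncomm_ring
      _ = E j * V * S := by rw [hEj2 j]
  constructor
  · intro j
    refine ⟨⟨?_, ?_⟩, ⟨E j * V * S, rfl, hWW j⟩⟩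
    · show star _ = _
      simp [star_mul, mul_assoc]
    · calc (star (E j * V * S) * (E j * V * S)) * (star (E j * V * S) * (E j * V * S))
          = star (E j * V * S) * (((E j * V * S) * star (E j * V * S)) * (E j * V * S)) := by
            noncomm_ring
        _ = star (E j * V * S) * (E j * V * S) := by rw [hWW j, hEW j]
  · intro x
    have h := (hEsum (V (S x))).mapL (S * star V)
    have hfun : (fun j => (star (E j * V * S) * (E j * V * S)) x)
        = fun j => (S * star V) (E j (V (S x))) := by
      funext j
      rw [hWstar j]
      calc (S * (star V * E j) * (E j * V * S)) x
          = S (star V (E j (E j (V (S x))))) := rfl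
        _ = S (star V ((E j * E j) (V (S x)))) := rfl
        _ = S (star V (E j (V (S x)))) := by rw [hEj2 j]
    have hval : (S * star V) (V (S x)) = A x := by
      calc (S * star V) (V (S x)) = S ((star V * V) (S x)) := rfl
        _ = S (rangeProj A (S x)) := by rw [hV]
        _ = S (S x) := by rw [hRS]
        _ = (S * S) x := rfl
        _ = A x := by rw [hS2]
    rw [hfun]
    rwa [hval] at h
end

section
/- Let (g₀, g₁, g₂, …) be mutually orthogonal unit vectors in H, let μ_j > 0 with λ := Σ_{j=1}^∞ μ_j ≤ 1, and let A := (1-λ)(g₀⊗g₀) + Σ_{j=1}^∞ (1+μ_j)(g_j⊗g_j) (converging strongly). Then A is a strong sum of rank-one projections: there exist rank-one projections P_j with A = Σ_{j=1}^∞ P_j in the strong operator topology. -/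
open Filter Finset

namespace Stmt17Aux

/-- tail sum -/
noncomputable def tl (μ : ℕ → ℝ) (n : ℕ) : ℝ := ∑' j, μ (j + n)

variable {μ : ℕ → ℝ}

section
variable (hμ : ∀ j, 0 < μ j) (hsum : Summable μ)
include hμ hsum

omit hμ in
lemma tl_summable (n : ℕ) : Summable (fun j => μ (j + n)) := (summable_nat_add_iff n).2 hsum

omit hμ in
lemma tl_succ (n : ℕ) : tl μ n = μ n + tl μ (n + 1) := by
  have h := Summable.tsum_eq_zero_add (tl_summable hsum n)
  simp only [zero_add] at h
  have : ∀ b : ℕ, μ (b + 1 + n) = μ (b + (n + 1)) := by intro b; ring_nf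
  unfold tl
  rw [h]
  congr 1
  exact tsum_congr this

lemma tl_pos (n : ℕ) : 0 < tl μ n := by
  have h := Summable.le_tsum (tl_summable hsum n) 0 (fun j _ => (hμ _).le)
  simpa [tl] using lt_of_lt_of_le (hμ n) (by simpa using h)

omit hμ in
lemma tl_eq_sub (n : ℕ) : tl μ n = tl μ 0 - ∑ i ∈ range n, μ i := by
  have h := Summable.sum_add_tsum_nat_add n hsum
  have h0 : tl μ 0 = ∑' i, μ i := by unfold tl; exact tsum_congr (by simp)
  unfold tl at h0 ⊢; rw [show (∑' (j:ℕ), μ (j + 0)) = ∑' (i:ℕ), μ i from tsum_congr (by simp)] at *; linarith [h]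

omit hμ in
lemma sum_Ico_mu {m n : ℕ} (h : m ≤ n) : ∑ k ∈ Ico m n, μ k = tl μ m - tl μ n := by
  rw [tl_eq_sub hsum m, tl_eq_sub hsum n]
  have := Finset.sum_Ico_eq_sub (f := μ) h
  linarith

lemma tl_anti {m n : ℕ} (h : m ≤ n) : tl μ n ≤ tl μ m := by
  have := sum_Ico_mu hsum h (μ := μ)
  have h2 : 0 ≤ ∑ k ∈ Ico m n, μ k := Finset.sum_nonneg (fun k _ => (hμ k).le)
  linarith

omit hμ in
lemma tl_tendsto : Tendsto (tl μ) atTop (nhds 0) := by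
  have h : ∀ n, tl μ n = tl μ 0 - ∑ i ∈ range n, μ i := tl_eq_sub hsum
  have h2 : Tendsto (fun n => ∑ i ∈ range n, μ i) atTop (nhds (tl μ 0)) := by
    have h0 : tl μ 0 = ∑' i, μ i := by unfold tl; exact tsum_congr (by simp)
    rw [h0]; exact hsum.hasSum.tendsto_sum_nat
  have h3 := (tendsto_const_nhds (x := tl μ 0)).sub h2
  have h4 : Tendsto (fun n => tl μ 0 - ∑ i ∈ range n, μ i) atTop (nhds 0) := by
    simpa using h3
  exact h4.congr (fun n => (h n).symm)

/-- contraction factor -/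
noncomputable def kap (μ : ℕ → ℝ) (n : ℕ) : ℝ := tl μ n / (tl μ n + μ n)

lemma kap_pos (n : ℕ) : 0 < kap μ n :=
  div_pos (tl_pos hμ hsum n) (by linarith [tl_pos hμ hsum n, hμ n])

lemma kap_le_one (n : ℕ) : kap μ n ≤ 1 := by
  have := tl_pos hμ hsum n; have := hμ n
  rw [kap, div_le_one (by linarith)]; linarith

/-- partial product of contraction factors -/
noncomputable def Qp (μ : ℕ → ℝ) (m n : ℕ) : ℝ := ∏ k ∈ Ico m n, kap μ k

lemma Qp_pos (m n : ℕ) : 0 < Qp μ m n := Finset.prod_pos (fun k _ => kap_pos hμ hsum k)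

lemma Qp_le_one (m n : ℕ) : Qp μ m n ≤ 1 :=
  Finset.prod_le_one (fun k _ => (kap_pos hμ hsum k).le) (fun k _ => kap_le_one hμ hsum k)

omit hμ hsum in
lemma one_add_sum_le_prod {s : Finset ℕ} {f : ℕ → ℝ} (hf : ∀ k ∈ s, 0 ≤ f k) :
    1 + ∑ k ∈ s, f k ≤ ∏ k ∈ s, (1 + f k) := by
  classical
  induction s using Finset.cons_induction with
  | empty => simp
  | cons a s ha ih =>
    rw [Finset.sum_cons, Finset.prod_cons]
    have h1 : 0 ≤ f a := hf a (Finset.mem_cons_self _ _)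
    have h2 : 1 + ∑ k ∈ s, f k ≤ ∏ k ∈ s, (1 + f k) := ih (fun k hk => hf k (Finset.mem_cons_of_mem hk))
    have h3 : 0 ≤ ∑ k ∈ s, f k := Finset.sum_nonneg (fun k hk => hf k (Finset.mem_cons_of_mem hk))
    nlinarith

/-- chunk bound: from any m we can push the product below 2/3 -/
lemma Qp_chunk (m : ℕ) : ∃ n, m ≤ n ∧ Qp μ m n ≤ 2/3 := by
  -- choose n with tl μ n ≤ tl μ m / 2
  have hT := tl_tendsto (μ := μ) hsum
  have hTm := tl_pos hμ hsum m
  obtain ⟨n0, hn0⟩ := (Metric.tendsto_atTop.1 hT (tl μ m / 2) (by linarith)).imp (fun n0 h => h)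
  set n := max m n0 with hn
  have hmn : m ≤ n := le_max_left _ _
  have hTn : tl μ n ≤ tl μ m / 2 := by
    have := hn0 n (le_max_right _ _)
    rw [Real.dist_eq] at this
    have := abs_lt.1 this
    linarith [this.1, this.2]
  refine ⟨n, hmn, ?_⟩
  -- 1/Qp = ∏ (1 + μ k / tl k) ≥ 1 + ∑ μ k / tl k ≥ 1 + (tl m - tl n)/tl m ≥ 3/2
  have hprod : Qp μ m n * ∏ k ∈ Ico m n, (1 + μ k / tl μ k) = 1 := by
    rw [Qp, ← Finset.prod_mul_distrib]
    apply Finset.prod_eq_one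
    intro k _
    have h1 := tl_pos hμ hsum k
    have h2 : tl μ k + μ k ≠ 0 := ne_of_gt (by linarith [hμ k])
    rw [kap]
    field_simp
  have hsum1 : 1 + ∑ k ∈ Ico m n, μ k / tl μ k ≤ ∏ k ∈ Ico m n, (1 + μ k / tl μ k) :=
    one_add_sum_le_prod (fun k _ => div_nonneg (hμ k).le (tl_pos hμ hsum k).le)
  have hsum2 : (tl μ m - tl μ n) / tl μ m ≤ ∑ k ∈ Ico m n, μ k / tl μ k := by
    rw [← sum_Ico_mu hsum hmn, Finset.sum_div]
    apply Finset.sum_le_sum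
    intro k hk
    have hk' := (Finset.mem_Ico.1 hk).1
    have h1 := tl_pos hμ hsum k
    have h2 := tl_anti hμ hsum hk'
    gcongr
    exact (hμ k).le
  have hhalf : (1:ℝ)/2 ≤ (tl μ m - tl μ n) / tl μ m := by
    rw [le_div_iff₀ hTm]; linarith
  have hge : (3:ℝ)/2 ≤ ∏ k ∈ Ico m n, (1 + μ k / tl μ k) := by linarith
  have hQ := Qp_pos hμ hsum m n (μ := μ)
  nlinarith [hprod]

omit hμ hsum in
lemma Qp_mul {m n k : ℕ} (h1 : m ≤ n) (h2 : n ≤ k) : Qp μ m n * Qp μ n k = Qp μ m k :=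
  Finset.prod_Ico_consecutive _ h1 h2

/-- iterate chunks -/
lemma Qp_pow (j : ℕ) (m : ℕ) : ∃ n, m ≤ n ∧ Qp μ m n ≤ (2/3)^j := by
  induction j generalizing m with
  | zero => exact ⟨m, le_refl _, by simp [Qp]⟩
  | succ j ih =>
    obtain ⟨n1, h1, hq1⟩ := Qp_chunk hμ hsum m
    obtain ⟨n2, h2, hq2⟩ := ih n1
    refine ⟨n2, le_trans h1 h2, ?_⟩
    rw [← Qp_mul h1 h2 (μ := μ)]
    have := Qp_pos hμ hsum m n1 (μ := μ)
    have := Qp_pos hμ hsum n1 n2 (μ := μ)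
    calc Qp μ m n1 * Qp μ n1 n2 ≤ (2/3) * (2/3)^j := by
          apply mul_le_mul hq1 hq2 (by linarith) (by norm_num)
      _ = (2/3)^(j+1) := by ring

lemma Qp_tendsto (m : ℕ) : Tendsto (Qp μ m) atTop (nhds 0) := by
  rw [Metric.tendsto_atTop]
  intro ε hε
  obtain ⟨j, hj⟩ := exists_pow_lt_of_lt_one hε (by norm_num : (2:ℝ)/3 < 1)
  obtain ⟨n0, hn0, hq⟩ := Qp_pow hμ hsum j m
  refine ⟨n0, fun n hn => ?_⟩
  have h1 : Qp μ m n ≤ Qp μ m n0 := by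
    rw [← Qp_mul hn0 hn (μ := μ)]
    have := Qp_pos hμ hsum m n0 (μ := μ)
    nlinarith [Qp_le_one hμ hsum n0 n (μ := μ), Qp_pos hμ hsum n0 n (μ := μ)]
  have h2 := Qp_pos hμ hsum m n (μ := μ)
  rw [Real.dist_eq, sub_zero, abs_of_pos h2]
  exact lt_of_le_of_lt (le_trans h1 hq) hj


end


/-! ### Part B: coefficients -/

noncomputable def aa (μ : ℕ → ℝ) (n : ℕ) : ℝ := 1 - tl μ n
noncomputable def bb (μ : ℕ → ℝ) (n : ℕ) : ℝ := 1 + μ n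
noncomputable def dd (μ : ℕ → ℝ) (n : ℕ) : ℝ := tl μ n + μ n
noncomputable def tp (μ : ℕ → ℝ) (n : ℕ) : ℝ := 1 - tl μ (n + 1)
noncomputable def x1 (μ : ℕ → ℝ) (n : ℕ) : ℝ := Real.sqrt (aa μ n * μ n / dd μ n)
noncomputable def x2 (μ : ℕ → ℝ) (n : ℕ) : ℝ := Real.sqrt (bb μ n * tl μ n / dd μ n)
noncomputable def y1 (μ : ℕ → ℝ) (n : ℕ) : ℝ := Real.sqrt (aa μ n * tl μ n / (dd μ n * tp μ n))
noncomputable def y2 (μ : ℕ → ℝ) (n : ℕ) : ℝ := -Real.sqrt (bb μ n * μ n / (dd μ n * tp μ n))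

section
set_option linter.unusedSectionVars false
variable (hμ : ∀ j, 0 < μ j) (hsum : Summable μ) (hlam1 : tl μ 0 ≤ 1)
include hμ hsum hlam1

lemma aa_nonneg (n : ℕ) : 0 ≤ aa μ n := by
  have := tl_anti hμ hsum (Nat.zero_le n)
  unfold aa; linarith

lemma tp_pos (n : ℕ) : 0 < tp μ n := by
  have h1 : tl μ (n+1) ≤ tl μ 1 := tl_anti hμ hsum (Nat.one_le_iff_ne_zero.2 (Nat.succ_ne_zero n))
  have h2 : tl μ 0 = μ 0 + tl μ 1 := tl_succ hsum 0
  have := hμ 0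
  unfold tp; linarith

lemma dd_pos (n : ℕ) : 0 < dd μ n := by
  have := tl_pos hμ hsum n; have := hμ n; unfold dd; linarith

lemma aa_le_tp (n : ℕ) : aa μ n ≤ tp μ n := by
  have h1 : tl μ (n+1) ≤ tl μ n := tl_anti hμ hsum (Nat.le_succ n)
  unfold aa tp; linarith

lemma x1_sq (n : ℕ) : x1 μ n ^ 2 = aa μ n * μ n / dd μ n := by
  rw [x1, Real.sq_sqrt]
  exact div_nonneg (mul_nonneg (aa_nonneg hμ hsum hlam1 n) (hμ n).le) (dd_pos hμ hsum hlam1 n).le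

lemma x2_sq (n : ℕ) : x2 μ n ^ 2 = bb μ n * tl μ n / dd μ n := by
  rw [x2, Real.sq_sqrt]
  have := hμ n; have := tl_pos hμ hsum n
  exact div_nonneg (mul_nonneg (by unfold bb; linarith) (by linarith)) (dd_pos hμ hsum hlam1 n).le

lemma y1_sq (n : ℕ) : y1 μ n ^ 2 = aa μ n * tl μ n / (dd μ n * tp μ n) := by
  rw [y1, Real.sq_sqrt]
  have := tl_pos hμ hsum n
  exact div_nonneg (mul_nonneg (aa_nonneg hμ hsum hlam1 n) (by linarith))
    (mul_nonneg (dd_pos hμ hsum hlam1 n).le (tp_pos hμ hsum hlam1 n).le)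

lemma y2_sq (n : ℕ) : y2 μ n ^ 2 = bb μ n * μ n / (dd μ n * tp μ n) := by
  rw [y2, neg_sq, Real.sq_sqrt]
  have := hμ n
  exact div_nonneg (mul_nonneg (by unfold bb; linarith) (by linarith))
    (mul_nonneg (dd_pos hμ hsum hlam1 n).le (tp_pos hμ hsum hlam1 n).le)

lemma I1 (n : ℕ) : x1 μ n ^ 2 + x2 μ n ^ 2 = 1 := by
  rw [x1_sq hμ hsum hlam1, x2_sq hμ hsum hlam1]
  have hd := dd_pos hμ hsum hlam1 n
  field_simp
  unfold aa bb dd; ring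

lemma I2 (n : ℕ) : y1 μ n ^ 2 + y2 μ n ^ 2 = 1 := by
  rw [y1_sq hμ hsum hlam1, y2_sq hμ hsum hlam1]
  have hd := dd_pos hμ hsum hlam1 n
  have ht := tp_pos hμ hsum hlam1 n
  have hs : tl μ n = μ n + tl μ (n+1) := tl_succ hsum n
  field_simp
  unfold aa bb dd tp
  rw [hs]; ring

lemma I3 (n : ℕ) : x1 μ n ^ 2 + tp μ n * y1 μ n ^ 2 = aa μ n := by
  rw [x1_sq hμ hsum hlam1, y1_sq hμ hsum hlam1]
  have hd := dd_pos hμ hsum hlam1 n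
  have ht := tp_pos hμ hsum hlam1 n
  field_simp
  unfold aa dd; ring

lemma I4 (n : ℕ) : x2 μ n ^ 2 + tp μ n * y2 μ n ^ 2 = bb μ n := by
  rw [x2_sq hμ hsum hlam1, y2_sq hμ hsum hlam1]
  have hd := dd_pos hμ hsum hlam1 n
  have ht := tp_pos hμ hsum hlam1 n
  field_simp
  unfold bb dd; ring

lemma I5 (n : ℕ) : x1 μ n * x2 μ n + tp μ n * (y1 μ n * y2 μ n) = 0 := by
  have hd := dd_pos hμ hsum hlam1 n
  have ht := tp_pos hμ hsum hlam1 n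
  have h1 : 0 ≤ x1 μ n * x2 μ n := mul_nonneg (Real.sqrt_nonneg _) (Real.sqrt_nonneg _)
  have h2 : tp μ n * (y1 μ n * y2 μ n) ≤ 0 := by
    have : y1 μ n * y2 μ n ≤ 0 := mul_nonpos_of_nonneg_of_nonpos (Real.sqrt_nonneg _)
      (by rw [y2]; exact neg_nonpos.2 (Real.sqrt_nonneg _))
    exact mul_nonpos_of_nonneg_of_nonpos ht.le this
  have hsq : (x1 μ n * x2 μ n) ^ 2 = (tp μ n * (y1 μ n * y2 μ n)) ^ 2 := by
    have e1 : (x1 μ n * x2 μ n) ^ 2 = x1 μ n ^2 * x2 μ n ^2 := by ring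
    have e2 : (tp μ n * (y1 μ n * y2 μ n)) ^ 2 = tp μ n ^2 * (y1 μ n ^2 * y2 μ n ^2) := by ring
    rw [e1, e2, x1_sq hμ hsum hlam1, x2_sq hμ hsum hlam1, y1_sq hμ hsum hlam1, y2_sq hμ hsum hlam1]
    field_simp
  nlinarith [hsq, h1, h2]

lemma y1_sq_le_kap (n : ℕ) : y1 μ n ^ 2 ≤ kap μ n := by
  rw [y1_sq hμ hsum hlam1, kap]
  have hd := dd_pos hμ hsum hlam1 n
  have ht := tp_pos hμ hsum hlam1 n
  have ha := aa_nonneg hμ hsum hlam1 n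
  have hat := aa_le_tp hμ hsum hlam1 n
  have htl := tl_pos hμ hsum n
  have hdd : dd μ n = tl μ n + μ n := rfl
  rw [div_le_div_iff₀ (by positivity) (by exact hd)]
  rw [hdd]
  have key : (tl μ n * (tl μ n + μ n)) * aa μ n ≤ (tl μ n * (tl μ n + μ n)) * tp μ n := by
    apply mul_le_mul_of_nonneg_left hat
    rw [hdd] at hd
    positivity
  nlinarith [key]

end



/-! ### Part C: vectors -/

open scoped InnerProductSpace ComplexConjugate

variable {H : Type*} [NormedAddCommGroup H] [InnerProductSpace ℂ H]

noncomputable def vv (g : ℕ → H) (μ : ℕ → ℝ) : ℕ → H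
  | 0 => g 0
  | (n+1) => ((y1 μ n : ℝ) : ℂ) • vv g μ n + ((y2 μ n : ℝ) : ℂ) • g (n+1)

noncomputable def xx (g : ℕ → H) (μ : ℕ → ℝ) (n : ℕ) : H :=
  ((x1 μ n : ℝ) : ℂ) • vv g μ n + ((x2 μ n : ℝ) : ℂ) • g (n+1)

noncomputable def cm (μ : ℕ → ℝ) : ℕ → ℕ → ℝ
  | 0, m => if m = 0 then 1 else 0
  | (n+1), m => y1 μ n * cm μ n m + (if m = n+1 then y2 μ n else 0)

lemma cm_zero (μ : ℕ → ℝ) : ∀ n m, n < m → cm μ n m = 0 := by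
  intro n
  induction n with
  | zero => intro m hm; simp only [cm]; rw [if_neg (by omega : ¬ m = 0)]
  | succ n ih =>
    intro m hm
    have h1 : n < m := by omega
    have h2 : m ≠ n + 1 := by omega
    simp [cm, ih m h1, h2]

lemma vv_span (g : ℕ → H) (μ : ℕ → ℝ) (n : ℕ) :
    vv g μ n = ∑ m ∈ Finset.range (n+1), ((cm μ n m : ℝ) : ℂ) • g m := by
  induction n with
  | zero => simp [vv, cm]
  | succ n ih =>
    rw [show vv g μ (n+1) = ((y1 μ n : ℝ) : ℂ) • vv g μ n + ((y2 μ n : ℝ) : ℂ) • g (n+1) from rfl, ih]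
    rw [Finset.sum_range_succ (f := fun m => ((cm μ (n+1) m : ℝ) : ℂ) • g m)]
    rw [Finset.smul_sum]
    have h1 : ∀ m ∈ Finset.range (n+1),
        ((y1 μ n : ℝ) : ℂ) • (((cm μ n m : ℝ) : ℂ) • g m) = ((cm μ (n+1) m : ℝ) : ℂ) • g m := by
      intro m hm
      have : m ≠ n + 1 := by have := Finset.mem_range.1 hm; omega
      rw [smul_smul, cm]
      push_cast
      simp [this]
    rw [Finset.sum_congr rfl h1]
    congr 1
    have : cm μ (n+1) (n+1) = y2 μ n := by
      rw [cm, cm_zero μ n (n+1) (Nat.lt_succ_self n)]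
      simp
    rw [this]

lemma inner_g_vv (g : ℕ → H) (horth : ∀ i j, ⟪g i, g j⟫_ℂ = if i = j then 1 else 0)
    (μ : ℕ → ℝ) (m n : ℕ) : ⟪g m, vv g μ n⟫_ℂ = ((cm μ n m : ℝ) : ℂ) := by
  rw [vv_span, inner_sum]
  by_cases hm : m ≤ n
  · rw [Finset.sum_eq_single m]
    · rw [inner_smul_right, horth m m]; simp
    · intro k hk hkm
      rw [inner_smul_right, horth m k, if_neg (fun h => hkm h.symm)]; simp
    · intro h; exact absurd (Finset.mem_range.2 (by omega)) h
  · rw [Finset.sum_eq_zero, cm_zero μ n m (by omega)]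
    · simp
    · intro k hk
      have : m ≠ k := by have := Finset.mem_range.1 hk; omega
      rw [inner_smul_right, horth m k, if_neg this]; simp

lemma inner_vv_g (g : ℕ → H) (horth : ∀ i j, ⟪g i, g j⟫_ℂ = if i = j then 1 else 0)
    (μ : ℕ → ℝ) (m n : ℕ) : ⟪vv g μ n, g m⟫_ℂ = ((cm μ n m : ℝ) : ℂ) := by
  rw [← inner_conj_symm, inner_g_vv g horth μ m n, Complex.conj_ofReal]

lemma inner_vv_x (g : ℕ → H) (μ : ℕ → ℝ) (n : ℕ) (x : H) :
    ⟪vv g μ n, x⟫_ℂ = ∑ m ∈ Finset.range (n+1), ((cm μ n m : ℝ) : ℂ) * ⟪g m, x⟫_ℂ := by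
  rw [vv_span, sum_inner]
  refine Finset.sum_congr rfl (fun m _ => ?_)
  rw [inner_smul_left, Complex.conj_ofReal]

section
set_option linter.unusedSectionVars false
variable {μ : ℕ → ℝ} (hμ : ∀ j, 0 < μ j) (hsum : Summable μ) (hlam1 : tl μ 0 ≤ 1)
  {g : ℕ → H} (horth : ∀ i j, ⟪g i, g j⟫_ℂ = if i = j then 1 else 0)
include hμ hsum hlam1 horth

lemma vv_inner_self (n : ℕ) : ⟪vv g μ n, vv g μ n⟫_ℂ = 1 := by
  induction n with
  | zero => rw [show vv g μ 0 = g 0 from rfl, horth 0 0]; simp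
  | succ n ih =>
    have hgv : ⟪g (n+1), vv g μ n⟫_ℂ = 0 := by
      rw [inner_g_vv g horth, cm_zero μ n (n+1) (Nat.lt_succ_self n)]; simp
    have hvg : ⟪vv g μ n, g (n+1)⟫_ℂ = 0 := by
      rw [inner_vv_g g horth, cm_zero μ n (n+1) (Nat.lt_succ_self n)]; simp
    have hI2 : ((y1 μ n ^ 2 + y2 μ n ^ 2 : ℝ) : ℂ) = 1 := by
      rw [I2 hμ hsum hlam1]; simp
    rw [show vv g μ (n+1) = ((y1 μ n : ℝ) : ℂ) • vv g μ n + ((y2 μ n : ℝ) : ℂ) • g (n+1) from rfl]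
    simp only [inner_add_left, inner_add_right, inner_smul_left, inner_smul_right,
      Complex.conj_ofReal, ih, hgv, hvg, horth (n+1) (n+1)]
    push_cast at hI2 ⊢
    ring_nf
    ring_nf at hI2
    linear_combination hI2

lemma vv_norm (n : ℕ) : ‖vv g μ n‖ = 1 := by
  have h := vv_inner_self hμ hsum hlam1 horth (n := n)
  have h2 := inner_self_eq_norm_sq (𝕜 := ℂ) (vv g μ n)
  rw [h] at h2
  have h3 : ‖vv g μ n‖ ^ 2 = 1 := by simpa using h2.symm
  nlinarith [norm_nonneg (vv g μ n)]

lemma cm_sq_sum (n : ℕ) : ∑ m ∈ Finset.range (n+1), cm μ n m ^ 2 = 1 := by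
  have h := vv_inner_self hμ hsum hlam1 horth (n := n)
  rw [inner_vv_x g μ n (vv g μ n)] at h
  have h2 : ∀ m ∈ Finset.range (n+1),
      ((cm μ n m : ℝ) : ℂ) * ⟪g m, vv g μ n⟫_ℂ = ((cm μ n m ^ 2 : ℝ) : ℂ) := by
    intro m _
    rw [inner_g_vv g horth]
    push_cast; ring
  rw [Finset.sum_congr rfl h2, ← Complex.ofReal_sum] at h
  exact_mod_cast h

lemma cm_sq_le_one (n m : ℕ) : cm μ n m ^ 2 ≤ 1 := by
  by_cases hm : m ≤ n
  · calc cm μ n m ^ 2 ≤ ∑ k ∈ Finset.range (n+1), cm μ n k ^ 2 :=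
        Finset.single_le_sum (f := fun k => cm μ n k ^ 2) (fun k _ => sq_nonneg _) (Finset.mem_range.2 (Nat.lt_succ_of_le hm))
      _ = 1 := cm_sq_sum hμ hsum hlam1 horth n
  · rw [cm_zero μ n m (by omega)]; norm_num

lemma cm_decay {m n : ℕ} (h : m ≤ n) : cm μ n m ^ 2 ≤ Qp μ m n := by
  induction n with
  | zero =>
    have : m = 0 := by omega
    subst this
    simpa [Qp] using cm_sq_le_one hμ hsum hlam1 horth 0 0
  | succ n ih =>
    by_cases hm : m ≤ n
    · have hne : m ≠ n + 1 := by omega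
      have : cm μ (n+1) m = y1 μ n * cm μ n m := by rw [cm]; simp [hne]
      rw [this, Qp, ← Finset.prod_Ico_consecutive _ hm (Nat.le_succ n),
        show Finset.Ico n (n+1) = {n} from by rw [Finset.Ico_add_one_right_eq_Icc, Finset.Icc_self]]
      rw [Finset.prod_singleton]
      have h1 := ih hm
      have h2 := y1_sq_le_kap hμ hsum hlam1 (n := n)
      have h3 := kap_pos hμ hsum (n := n) (μ := μ)
      have h4 := Qp_pos hμ hsum m n (μ := μ)
      calc (y1 μ n * cm μ n m) ^ 2 = y1 μ n ^2 * cm μ n m ^2 := by ring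
        _ ≤ kap μ n * Qp μ m n := by
            apply mul_le_mul h2 h1 (sq_nonneg _) h3.le
        _ = Qp μ m n * kap μ n := by ring
    · have : m = n + 1 := by omega
      subst this
      simpa [Qp] using cm_sq_le_one hμ hsum hlam1 horth (n+1) (n+1)

lemma cm_tendsto (m : ℕ) : Filter.Tendsto (fun n => cm μ n m) atTop (nhds 0) := by
  apply squeeze_zero_norm' (a := fun n => Real.sqrt (Qp μ m n))
  · filter_upwards [eventually_ge_atTop m] with n hn
    rw [Real.norm_eq_abs, ← Real.sqrt_sq_eq_abs]
    exact Real.sqrt_le_sqrt (cm_decay hμ hsum hlam1 horth hn)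
  · have := (Real.continuous_sqrt.tendsto 0).comp (Qp_tendsto hμ hsum m)
    simpa [Function.comp_def] using this

lemma weak_null (x : H) :
    Filter.Tendsto (fun n => ⟪vv g μ n, x⟫_ℂ) atTop (nhds 0) := by
  have horn : Orthonormal ℂ g := by
    rw [orthonormal_iff_ite]; exact horth
  have hb : Summable (fun m => ‖⟪g m, x⟫_ℂ‖ ^ 2) := horn.inner_products_summable x
  rw [Metric.tendsto_atTop]
  intro ε hε
  -- choose M with tail < (ε/2)^2
  set f : ℕ → ℝ := fun m => ‖⟪g m, x⟫_ℂ‖ ^ 2 with hf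
  have htail : Filter.Tendsto (tl f) atTop (nhds 0) := tl_tendsto hb
  obtain ⟨M, hM⟩ := (Metric.tendsto_atTop.1 htail ((ε/2)^2) (by positivity))
  have hMtail : tl f M < (ε/2)^2 := by
    have := hM M le_rfl
    rw [Real.dist_eq, sub_zero] at this
    calc tl f M ≤ |tl f M| := le_abs_self _
      _ < (ε/2)^2 := this
  -- finite part tends to 0
  have hfin : Filter.Tendsto (fun n => ∑ m ∈ Finset.range M, ‖cm μ n m‖ * ‖⟪g m, x⟫_ℂ‖)
      atTop (nhds 0) := by
    have : ∀ m ∈ Finset.range M, Filter.Tendsto (fun n => ‖cm μ n m‖ * ‖⟪g m, x⟫_ℂ‖)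
        atTop (nhds 0) := by
      intro m _
      have := ((cm_tendsto hμ hsum hlam1 horth m).norm).mul_const (‖⟪g m, x⟫_ℂ‖)
      simpa using this
    have := tendsto_finset_sum (Finset.range M) this
    simpa using this
  obtain ⟨N0, hN0⟩ := (Metric.tendsto_atTop.1 hfin (ε/2) (by positivity))
  refine ⟨max M N0, fun n hn => ?_⟩
  have hnM : M ≤ n := le_trans (le_max_left _ _) hn
  have hnN0 : N0 ≤ n := le_trans (le_max_right _ _) hn
  rw [dist_zero_right]
  have hsplit : ⟪vv g μ n, x⟫_ℂ
      = (∑ m ∈ Finset.range M, ((cm μ n m : ℝ) : ℂ) * ⟪g m, x⟫_ℂ)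
        + ∑ m ∈ Finset.Ico M (n+1), ((cm μ n m : ℝ) : ℂ) * ⟪g m, x⟫_ℂ := by
    rw [inner_vv_x g μ n x,
      ← Finset.sum_range_add_sum_Ico _ (by omega : M ≤ n+1)]
  rw [hsplit]
  have hnorm : ∀ (s : Finset ℕ), ‖∑ m ∈ s, ((cm μ n m : ℝ) : ℂ) * ⟪g m, x⟫_ℂ‖
      ≤ ∑ m ∈ s, ‖cm μ n m‖ * ‖⟪g m, x⟫_ℂ‖ := by
    intro s
    calc ‖∑ m ∈ s, ((cm μ n m : ℝ) : ℂ) * ⟪g m, x⟫_ℂ‖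
        ≤ ∑ m ∈ s, ‖((cm μ n m : ℝ) : ℂ) * ⟪g m, x⟫_ℂ‖ := norm_sum_le _ _
      _ = ∑ m ∈ s, ‖cm μ n m‖ * ‖⟪g m, x⟫_ℂ‖ := by
          refine Finset.sum_congr rfl (fun m _ => ?_)
          rw [norm_mul, Complex.norm_real]
  have h1 : ‖∑ m ∈ Finset.range M, ((cm μ n m : ℝ) : ℂ) * ⟪g m, x⟫_ℂ‖ < ε/2 := by
    have hb1 := hN0 n hnN0
    rw [Real.dist_eq, sub_zero] at hb1
    have hb2 : ∑ m ∈ Finset.range M, ‖cm μ n m‖ * ‖⟪g m, x⟫_ℂ‖ < ε/2 :=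
      lt_of_le_of_lt (le_abs_self _) hb1
    exact lt_of_le_of_lt (hnorm _) hb2
  have h2 : ‖∑ m ∈ Finset.Ico M (n+1), ((cm μ n m : ℝ) : ℂ) * ⟪g m, x⟫_ℂ‖ ≤ ε/2 := by
    refine le_trans (hnorm _) ?_
    set S := ∑ m ∈ Finset.Ico M (n+1), ‖cm μ n m‖ * ‖⟪g m, x⟫_ℂ‖ with hS
    have hS0 : 0 ≤ S := Finset.sum_nonneg (fun m _ => mul_nonneg (norm_nonneg _) (norm_nonneg _))
    have hcs : S^2 ≤ (∑ m ∈ Finset.Ico M (n+1), ‖cm μ n m‖^2)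
        * (∑ m ∈ Finset.Ico M (n+1), ‖⟪g m, x⟫_ℂ‖^2) :=
      Finset.sum_mul_sq_le_sq_mul_sq _ _ _
    have hc1 : (∑ m ∈ Finset.Ico M (n+1), ‖cm μ n m‖^2) ≤ 1 := by
      calc (∑ m ∈ Finset.Ico M (n+1), ‖cm μ n m‖^2)
          ≤ ∑ m ∈ Finset.range (n+1), ‖cm μ n m‖^2 := by
            apply Finset.sum_le_sum_of_subset_of_nonneg
            · intro k hk
              rw [Finset.mem_range]
              exact (Finset.mem_Ico.1 hk).2
            · intro k _ _; positivity
        _ = ∑ m ∈ Finset.range (n+1), cm μ n m ^2 := by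
            refine Finset.sum_congr rfl (fun m _ => ?_)
            rw [Real.norm_eq_abs, sq_abs]
        _ = 1 := cm_sq_sum hμ hsum hlam1 horth n
    have hc2 : (∑ m ∈ Finset.Ico M (n+1), ‖⟪g m, x⟫_ℂ‖^2) ≤ tl f M := by
      rw [Finset.sum_Ico_eq_sum_range]
      have hsummM : Summable (fun j => f (j + M)) := tl_summable hb M
      calc ∑ k ∈ Finset.range (n+1-M), ‖⟪g (M + k), x⟫_ℂ‖^2
          = ∑ k ∈ Finset.range (n+1-M), f (k + M) := by
            refine Finset.sum_congr rfl (fun k _ => ?_)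
            rw [hf]; ring_nf
        _ ≤ ∑' j, f (j + M) := Summable.sum_le_tsum _ (fun i _ => by rw [hf]; positivity) hsummM
        _ = tl f M := rfl
    have hfM0 : 0 ≤ tl f M := le_trans (by positivity) hc2
    have : S^2 < (ε/2)^2 := by
      calc S^2 ≤ 1 * tl f M := le_trans hcs (by
            apply mul_le_mul hc1 hc2 (by positivity) (by norm_num))
        _ = tl f M := by ring
        _ < (ε/2)^2 := hMtail
    nlinarith
  calc ‖(∑ m ∈ Finset.range M, ((cm μ n m : ℝ) : ℂ) * ⟪g m, x⟫_ℂ)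
      + ∑ m ∈ Finset.Ico M (n+1), ((cm μ n m : ℝ) : ℂ) * ⟪g m, x⟫_ℂ‖
      ≤ ‖∑ m ∈ Finset.range M, ((cm μ n m : ℝ) : ℂ) * ⟪g m, x⟫_ℂ‖
        + ‖∑ m ∈ Finset.Ico M (n+1), ((cm μ n m : ℝ) : ℂ) * ⟪g m, x⟫_ℂ‖ := norm_add_le _ _
    _ < ε := by linarith

lemma inner_vv_gsucc (n : ℕ) : ⟪vv g μ n, g (n+1)⟫_ℂ = 0 := by
  rw [inner_vv_g g horth, cm_zero μ n (n+1) (Nat.lt_succ_self n)]; simp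

lemma inner_gsucc_vv (n : ℕ) : ⟪g (n+1), vv g μ n⟫_ℂ = 0 := by
  rw [inner_g_vv g horth, cm_zero μ n (n+1) (Nat.lt_succ_self n)]; simp

lemma xx_inner_self (n : ℕ) : ⟪xx g μ n, xx g μ n⟫_ℂ = 1 := by
  have hI1 : ((x1 μ n ^ 2 + x2 μ n ^ 2 : ℝ) : ℂ) = 1 := by
    rw [I1 hμ hsum hlam1]; simp
  rw [show xx g μ n = ((x1 μ n : ℝ) : ℂ) • vv g μ n + ((x2 μ n : ℝ) : ℂ) • g (n+1) from rfl]
  simp only [inner_add_left, inner_add_right, inner_smul_left, inner_smul_right,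
    Complex.conj_ofReal, vv_inner_self hμ hsum hlam1 horth, inner_vv_gsucc hμ hsum hlam1 horth,
    inner_gsucc_vv hμ hsum hlam1 horth, horth (n+1) (n+1)]
  push_cast at hI1 ⊢
  ring_nf
  ring_nf at hI1
  linear_combination hI1

lemma xx_norm (n : ℕ) : ‖xx g μ n‖ = 1 := by
  have h := xx_inner_self hμ hsum hlam1 horth (n := n)
  have h2 := inner_self_eq_norm_sq (𝕜 := ℂ) (xx g μ n)
  rw [h] at h2
  have h3 : ‖xx g μ n‖ ^ 2 = 1 := by simpa using h2.symm
  nlinarith [norm_nonneg (xx g μ n)]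

lemma step_identity (n : ℕ) (x : H) :
    ((aa μ n : ℝ) : ℂ) • (⟪vv g μ n, x⟫_ℂ • vv g μ n)
      + ((bb μ n : ℝ) : ℂ) • (⟪g (n+1), x⟫_ℂ • g (n+1))
    = ⟪xx g μ n, x⟫_ℂ • xx g μ n
      + ((tp μ n : ℝ) : ℂ) • (⟪vv g μ (n+1), x⟫_ℂ • vv g μ (n+1)) := by
  have c3 : ((x1 μ n : ℝ) : ℂ)^2 + ((tp μ n : ℝ) : ℂ) * ((y1 μ n : ℝ) : ℂ)^2
      = ((aa μ n : ℝ) : ℂ) := by exact_mod_cast I3 hμ hsum hlam1 n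
  have c4 : ((x2 μ n : ℝ) : ℂ)^2 + ((tp μ n : ℝ) : ℂ) * ((y2 μ n : ℝ) : ℂ)^2
      = ((bb μ n : ℝ) : ℂ) := by exact_mod_cast I4 hμ hsum hlam1 n
  have c5 : ((x1 μ n : ℝ) : ℂ) * ((x2 μ n : ℝ) : ℂ)
      + ((tp μ n : ℝ) : ℂ) * (((y1 μ n : ℝ) : ℂ) * ((y2 μ n : ℝ) : ℂ)) = 0 := by
    exact_mod_cast I5 hμ hsum hlam1 n
  have hxx : ⟪xx g μ n, x⟫_ℂ
      = ((x1 μ n : ℝ) : ℂ) * ⟪vv g μ n, x⟫_ℂ + ((x2 μ n : ℝ) : ℂ) * ⟪g (n+1), x⟫_ℂ := by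
    rw [show xx g μ n = ((x1 μ n : ℝ) : ℂ) • vv g μ n + ((x2 μ n : ℝ) : ℂ) • g (n+1) from rfl]
    rw [inner_add_left, inner_smul_left, inner_smul_left, Complex.conj_ofReal, Complex.conj_ofReal]
  have hvv1 : ⟪vv g μ (n+1), x⟫_ℂ
      = ((y1 μ n : ℝ) : ℂ) * ⟪vv g μ n, x⟫_ℂ + ((y2 μ n : ℝ) : ℂ) * ⟪g (n+1), x⟫_ℂ := by
    rw [show vv g μ (n+1) = ((y1 μ n : ℝ) : ℂ) • vv g μ n + ((y2 μ n : ℝ) : ℂ) • g (n+1) from rfl]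
    rw [inner_add_left, inner_smul_left, inner_smul_left, Complex.conj_ofReal, Complex.conj_ofReal]
  rw [hxx, hvv1,
    show vv g μ (n+1) = ((y1 μ n : ℝ) : ℂ) • vv g μ n + ((y2 μ n : ℝ) : ℂ) • g (n+1) from rfl,
    show xx g μ n = ((x1 μ n : ℝ) : ℂ) • vv g μ n + ((x2 μ n : ℝ) : ℂ) • g (n+1) from rfl]
  match_scalars
  · linear_combination -(⟪vv g μ n, x⟫_ℂ * c3) - ⟪g (n+1), x⟫_ℂ * c5
  · linear_combination -(⟪g (n+1), x⟫_ℂ * c4) - ⟪vv g μ n, x⟫_ℂ * c5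
end



/-! ### Part D: remainder and telescoping -/

noncomputable def fz (g : ℕ → H) (μ : ℕ → ℝ) (z : H) (j : ℕ) : H :=
  ((1 + μ j : ℝ) : ℂ) • (⟪g (j + 1), z⟫_ℂ • g (j + 1))

noncomputable def Rv (g : ℕ → H) (μ : ℕ → ℝ) (A : H →L[ℂ] H) (lam : ℝ) (z : H) (n : ℕ) : H :=
  ((1 - tl μ n : ℝ) : ℂ) • (⟪vv g μ n, z⟫_ℂ • vv g μ n)
    + ((A z - ((1 - lam : ℝ) : ℂ) • (⟪g 0, z⟫_ℂ • g 0)) - ∑ j ∈ Finset.range n, fz g μ z j)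

section
set_option linter.unusedSectionVars false
variable {μ : ℕ → ℝ} (hμ : ∀ j, 0 < μ j) (hsum : Summable μ) (hlam1 : tl μ 0 ≤ 1)
  {g : ℕ → H} (horth : ∀ i j, ⟪g i, g j⟫_ℂ = if i = j then 1 else 0)
  {A : H →L[ℂ] H} {lam : ℝ} (hlam : lam = tl μ 0)
  (hA : ∀ x : H, HasSum (fun j : ℕ => ((1 + μ j : ℝ) : ℂ) • (⟪g (j + 1), x⟫_ℂ • g (j + 1)))
      (A x - ((1 - lam : ℝ) : ℂ) • (⟪g 0, x⟫_ℂ • g 0)))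
include hμ hsum hlam1 horth hlam hA

lemma Rv_zero (z : H) : Rv g μ A lam z 0 = A z := by
  simp only [Rv, Finset.range_zero, Finset.sum_empty, sub_zero, hlam]
  rw [show vv g μ 0 = g 0 from rfl]
  abel

lemma Rv_step (z : H) (n : ℕ) :
    Rv g μ A lam z n = ⟪xx g μ n, z⟫_ℂ • xx g μ n + Rv g μ A lam z (n + 1) := by
  have key := step_identity hμ hsum hlam1 horth n z
  simp only [aa, bb, tp] at key
  simp only [Rv, fz, Finset.sum_range_succ]
  linear_combination (norm := module) key

lemma Rv_partial (z : H) (n : ℕ) :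
    A z = (∑ j ∈ Finset.range n, ⟪xx g μ j, z⟫_ℂ • xx g μ j) + Rv g μ A lam z n := by
  induction n with
  | zero => simp [Rv_zero hμ hsum hlam1 horth hlam hA z]
  | succ n ih =>
    rw [Finset.sum_range_succ, ih, Rv_step hμ hsum hlam1 horth hlam hA z n]
    abel

lemma Rv_tendsto (z : H) :
    Filter.Tendsto (Rv g μ A lam z) atTop (nhds 0) := by
  have h1 : Filter.Tendsto
      (fun n => ((1 - tl μ n : ℝ) : ℂ) • (⟪vv g μ n, z⟫_ℂ • vv g μ n)) atTop (nhds 0) := by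
    apply squeeze_zero_norm' (a := fun n => ‖⟪vv g μ n, z⟫_ℂ‖)
    · filter_upwards with n
      have h2 : 0 ≤ tl μ n := (tl_pos hμ hsum n).le
      have h3 : tl μ n ≤ 1 := le_trans (tl_anti hμ hsum (Nat.zero_le n)) hlam1
      rw [norm_smul, norm_smul, Complex.norm_real, Real.norm_eq_abs, abs_of_nonneg (by linarith),
        vv_norm hμ hsum hlam1 horth]
      nlinarith [norm_nonneg (⟪vv g μ n, z⟫_ℂ)]
    · have := (weak_null hμ hsum hlam1 horth z).norm
      simpa using this
  have h2 : Filter.Tendsto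
      (fun n => ((A z - ((1 - lam : ℝ) : ℂ) • (⟪g 0, z⟫_ℂ • g 0))
        - ∑ j ∈ Finset.range n, fz g μ z j)) atTop (nhds 0) := by
    have h3 := (hA z).tendsto_sum_nat
    have h4 := (tendsto_const_nhds
      (x := A z - ((1 - lam : ℝ) : ℂ) • (⟪g 0, z⟫_ℂ • g 0))).sub h3
    simpa [fz] using h4
  have h5 := h1.add h2
  rw [add_zero] at h5
  exact h5.congr fun n => rfl

lemma re_inner_fz (z : H) (j : ℕ) :
    Complex.reCLM ((innerSL ℂ z).restrictScalars ℝ (fz g μ z j)) = (1 + μ j) * ‖⟪g (j+1), z⟫_ℂ‖^2 := by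
  simp only [ContinuousLinearMap.coe_restrictScalars', innerSL_apply_apply, fz]
  rw [inner_smul_right, inner_smul_right]
  have : ⟪z, g (j+1)⟫_ℂ = starRingEnd ℂ ⟪g (j+1), z⟫_ℂ := (inner_conj_symm _ _).symm
  rw [this, Complex.mul_conj, ← Complex.ofReal_mul]
  simp only [Complex.reCLM_apply, Complex.ofReal_re]
  rw [Complex.normSq_eq_norm_sq]

lemma Rv_re_nonneg (z : H) (n : ℕ) : 0 ≤ (⟪Rv g μ A lam z n, z⟫_ℂ).re := by
  set w := (A z - ((1 - lam : ℝ) : ℂ) • (⟪g 0, z⟫_ℂ • g 0)) - ∑ j ∈ Finset.range n, fz g μ z j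
    with hw
  have htail : HasSum (fun j => fz g μ z (j + n)) w := by
    apply (hasSum_nat_add_iff (f := fz g μ z) n).2
    rw [hw, sub_add_cancel]
    exact hA z
  set L : H →L[ℝ] ℝ := Complex.reCLM.comp ((innerSL ℂ z).restrictScalars ℝ) with hL
  have h3 : HasSum (fun j => L (fz g μ z (j + n))) (L w) := L.hasSum htail
  have h4 : 0 ≤ L w := by
    apply h3.nonneg
    intro j
    have := re_inner_fz hμ hsum hlam1 horth hlam hA z (j + n)
    rw [hL]
    simp only [ContinuousLinearMap.comp_apply]
    rw [this]
    have := hμ (j + n)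
    positivity
  have e1 : (⟪((1 - tl μ n : ℝ) : ℂ) • (⟪vv g μ n, z⟫_ℂ • vv g μ n), z⟫_ℂ).re
      = (1 - tl μ n) * ‖⟪vv g μ n, z⟫_ℂ‖^2 := by
    rw [inner_smul_left, inner_smul_left, Complex.conj_ofReal]
    rw [mul_comm ((starRingEnd ℂ) ⟪vv g μ n, z⟫_ℂ) (⟪vv g μ n, z⟫_ℂ), Complex.mul_conj,
      ← Complex.ofReal_mul, Complex.ofReal_re, Complex.normSq_eq_norm_sq]
  have e2 : (⟪w, z⟫_ℂ).re = L w := by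
    rw [hL]
    simp only [ContinuousLinearMap.comp_apply, ContinuousLinearMap.coe_restrictScalars',
      innerSL_apply_apply]
    have h7 : ⟪w, z⟫_ℂ = starRingEnd ℂ ⟪z, w⟫_ℂ := (inner_conj_symm _ _).symm
    rw [h7, Complex.conj_re]
    rfl
  have e3 : (⟪Rv g μ A lam z n, z⟫_ℂ).re
      = (1 - tl μ n) * ‖⟪vv g μ n, z⟫_ℂ‖^2 + L w := by
    rw [Rv, ← hw, inner_add_left, Complex.add_re, e1, e2]
  rw [e3]
  have h6 : 0 ≤ 1 - tl μ n := by
    have := tl_anti hμ hsum (Nat.zero_le n)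
    linarith
  positivity

omit hμ hsum hlam1 horth hlam hA in
lemma re_inner_rankone (u z : H) : (⟪⟪u, z⟫_ℂ • u, z⟫_ℂ).re = ‖⟪u, z⟫_ℂ‖^2 := by
  rw [inner_smul_left,
    mul_comm ((starRingEnd ℂ) ⟪u, z⟫_ℂ) (⟪u, z⟫_ℂ), Complex.mul_conj, Complex.ofReal_re,
    Complex.normSq_eq_norm_sq]

lemma form_bound (z : H) (N : ℕ) (u : Finset ℕ) (hu : ∀ j ∈ u, N ≤ j) :
    ∑ j ∈ u, ‖⟪xx g μ j, z⟫_ℂ‖^2 ≤ (⟪Rv g μ A lam z N, z⟫_ℂ).re := by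
  classical
  set n' : ℕ := max (if h : u.Nonempty then u.max' h + 1 else N) N with hn'
  have hNn' : N ≤ n' := le_max_right _ _
  have husub : u ⊆ Finset.Ico N n' := by
    intro j hj
    rw [Finset.mem_Ico]
    refine ⟨hu j hj, ?_⟩
    have h1 : u.Nonempty := ⟨j, hj⟩
    have h2 : j ≤ u.max' h1 := Finset.le_max' u j hj
    calc j < u.max' h1 + 1 := by omega
      _ = (if h : u.Nonempty then u.max' h + 1 else N) := by rw [dif_pos h1]
      _ ≤ n' := le_max_left _ _
  -- Rv N = ∑_{Ico N n'} P j z + Rv n'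
  have hdecomp : Rv g μ A lam z N
      = (∑ j ∈ Finset.Ico N n', ⟪xx g μ j, z⟫_ℂ • xx g μ j) + Rv g μ A lam z n' := by
    have h1 := Rv_partial hμ hsum hlam1 horth hlam hA z N
    have h2 := Rv_partial hμ hsum hlam1 horth hlam hA z n'
    have h3 := Finset.sum_range_add_sum_Ico (fun j => ⟪xx g μ j, z⟫_ℂ • xx g μ j) hNn'
    apply add_left_cancel (a := ∑ j ∈ Finset.range N, ⟪xx g μ j, z⟫_ℂ • xx g μ j)
    rw [← h1, h2, ← h3]
    abel
  have hre : (⟪Rv g μ A lam z N, z⟫_ℂ).re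
      = (∑ j ∈ Finset.Ico N n', ‖⟪xx g μ j, z⟫_ℂ‖^2) + (⟪Rv g μ A lam z n', z⟫_ℂ).re := by
    rw [hdecomp, inner_add_left, Complex.add_re, sum_inner, Complex.re_sum]
    congr 1
    exact Finset.sum_congr rfl (fun j _ => re_inner_rankone _ _)
  rw [hre]
  have h5 := Rv_re_nonneg hμ hsum hlam1 horth hlam hA z n'
  have h6 : ∑ j ∈ u, ‖⟪xx g μ j, z⟫_ℂ‖^2 ≤ ∑ j ∈ Finset.Ico N n', ‖⟪xx g μ j, z⟫_ℂ‖^2 :=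
    Finset.sum_le_sum_of_subset_of_nonneg husub (fun j _ _ => by positivity)
  linarith

lemma re_partial (z : H) (n : ℕ) :
    (⟪A z, z⟫_ℂ).re
      = (∑ j ∈ Finset.range n, ‖⟪xx g μ j, z⟫_ℂ‖^2) + (⟪Rv g μ A lam z n, z⟫_ℂ).re := by
  rw [Rv_partial hμ hsum hlam1 horth hlam hA z n, inner_add_left, Complex.add_re, sum_inner,
    Complex.re_sum]
  congr 1
  exact Finset.sum_congr rfl (fun j _ => re_inner_rankone _ _)
end

end Stmt17Aux


open Stmt17Aux Filter Finset

open scoped InnerProductSpace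

variable {H : Type*} [NormedAddCommGroup H] [InnerProductSpace ℂ H] [CompleteSpace H]

set_option maxHeartbeats 2000000 in
/-- Lemma 4.1(i): let `(g₀, g₁, g₂, …)` be orthonormal vectors, `μ_j > 0` with
`λ = Σ_j μ_j ≤ 1`, and let `A = (1-λ)(g₀⊗g₀) + Σ_{j≥1} (1+μ_j)(g_j⊗g_j)` (strong
convergence).  Then `A` is a strongly convergent sum of rank-one projections. -/
theorem stmt_17 (g : ℕ → H) (horth : ∀ i j, ⟪g i, g j⟫_ℂ = if i = j then 1 else 0)
    (μ : ℕ → ℝ) (hμ : ∀ j, 0 < μ j) (hsummable : Summable μ)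
    (lam : ℝ) (hlam : lam = ∑' j, μ j) (hlam1 : lam ≤ 1)
    (A : H →L[ℂ] H)
    (hA : ∀ x : H, HasSum (fun j : ℕ => ((1 + μ j : ℝ) : ℂ) • (⟪g (j + 1), x⟫_ℂ • g (j + 1)))
      (A x - ((1 - lam : ℝ) : ℂ) • (⟪g 0, x⟫_ℂ • g 0))) :
    ∃ P : ℕ → (H →L[ℂ] H), (∀ j, IsRankOneProjection (P j)) ∧
      ∀ x : H, HasSum (fun j => P j x) (A x) := by
  classical
  have hlam' : lam = tl μ 0 := by
    rw [hlam]; exact (tsum_congr (fun j => by rw [Nat.add_zero])).symm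
  have hlam1' : tl μ 0 ≤ 1 := by rw [← hlam']; exact hlam1
  have re_le_norm : ∀ w : ℂ, w.re ≤ ‖w‖ := fun w => by
    exact Complex.re_le_norm w
  refine ⟨fun n => rankOne (xx g μ n),
    fun n => ⟨xx g μ n, xx_norm hμ hsummable hlam1' horth n, rfl⟩, ?_⟩
  intro x
  have hrank : ∀ (j : ℕ) (z : H), rankOne (xx g μ j) z = ⟪xx g μ j, z⟫_ℂ • xx g μ j :=
    fun j z => rfl
  rw [HasSum, SummationFilter.unconditional_filter, Metric.tendsto_atTop]
  intro ε hε
  set X := ‖x‖ with hXdef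
  set C := ‖A‖ with hCdef
  have hC : 0 ≤ C := norm_nonneg _
  have hX : 0 ≤ X := norm_nonneg _
  set δ := min (ε/2) ((ε/2)^2 / (C * X + 1)) with hδdef
  have hδpos : 0 < δ := lt_min (by linarith) (by positivity)
  have hδhalf : δ ≤ ε/2 := min_le_left _ _
  have hδkey : δ * (C * X + 1) ≤ (ε/2)^2 := by
    have h1 : δ ≤ (ε/2)^2 / (C * X + 1) := min_le_right _ _
    rw [le_div_iff₀ (by positivity)] at h1
    exact h1
  obtain ⟨N, hN⟩ :=
    Metric.tendsto_atTop.1 (Rv_tendsto hμ hsummable hlam1' horth hlam' hA x) δ hδpos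
  have hRN : ‖Rv g μ A lam x N‖ < δ := by
    have := hN N le_rfl; rwa [dist_zero_right] at this
  refine ⟨Finset.range N, fun s hs => ?_⟩
  rw [dist_eq_norm]
  set E := ∑ j ∈ s \ Finset.range N, ⟪xx g μ j, x⟫_ℂ • xx g μ j with hE
  have hsplit : (∑ j ∈ s, rankOne (xx g μ j) x) - A x = E - Rv g μ A lam x N := by
    have h1 := Rv_partial hμ hsummable hlam1' horth hlam' hA x N
    have h3 : (∑ j ∈ s \ Finset.range N, ⟪xx g μ j, x⟫_ℂ • xx g μ j)
        + ∑ j ∈ Finset.range N, ⟪xx g μ j, x⟫_ℂ • xx g μ j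
        = ∑ j ∈ s, ⟪xx g μ j, x⟫_ℂ • xx g μ j := Finset.sum_sdiff hs
    have h2 : ∑ j ∈ s, rankOne (xx g μ j) x = ∑ j ∈ s, ⟪xx g μ j, x⟫_ℂ • xx g μ j :=
      Finset.sum_congr rfl (fun j _ => hrank j x)
    rw [h2, ← h3, h1, hE]
    abel
  rw [hsplit]
  have hu : ∀ j ∈ s \ Finset.range N, N ≤ j := by
    intro j hj
    have := (Finset.mem_sdiff.1 hj).2
    simpa [Finset.mem_range, not_lt] using this
  set ρ := (⟪Rv g μ A lam x N, x⟫_ℂ).re with hρ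
  have hρ0 : 0 ≤ ρ := Rv_re_nonneg hμ hsummable hlam1' horth hlam' hA x N
  have hρle : ρ ≤ δ * X := by
    calc ρ ≤ ‖⟪Rv g μ A lam x N, x⟫_ℂ‖ := re_le_norm _
      _ ≤ ‖Rv g μ A lam x N‖ * X := norm_inner_le_norm _ _
      _ ≤ δ * X := by nlinarith
  have hcs1 : ∑ j ∈ s \ Finset.range N, ‖⟪xx g μ j, x⟫_ℂ‖^2 ≤ ρ :=
    form_bound hμ hsummable hlam1' horth hlam' hA x N _ hu
  have hcs2 : ∑ j ∈ s \ Finset.range N, ‖⟪xx g μ j, E⟫_ℂ‖^2 ≤ C * ‖E‖^2 := by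
    have h4 := form_bound hμ hsummable hlam1' horth hlam' hA E N _ hu
    have h7 := re_partial hμ hsummable hlam1' horth hlam' hA E N
    have h8 : (⟪A E, E⟫_ℂ).re ≤ C * ‖E‖^2 := by
      calc (⟪A E, E⟫_ℂ).re ≤ ‖⟪A E, E⟫_ℂ‖ := re_le_norm _
        _ ≤ ‖A E‖ * ‖E‖ := norm_inner_le_norm _ _
        _ ≤ (C * ‖E‖) * ‖E‖ := by nlinarith [A.le_opNorm E, norm_nonneg E]
        _ = C * ‖E‖^2 := by ring
    have h9 : 0 ≤ ∑ j ∈ Finset.range N, ‖⟪xx g μ j, E⟫_ℂ‖^2 := by positivity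
    linarith
  -- Cauchy–Schwarz bound for ‖E‖
  have hEE : ‖E‖^2 = (⟪E, E⟫_ℂ).re := by
    have := inner_self_eq_norm_sq (𝕜 := ℂ) E
    simpa using this.symm
  have hinner : ⟪E, E⟫_ℂ
      = ∑ j ∈ s \ Finset.range N, (starRingEnd ℂ) ⟪xx g μ j, x⟫_ℂ * ⟪xx g μ j, E⟫_ℂ := by
    rw [hE]
    rw [sum_inner]
    exact Finset.sum_congr rfl (fun j _ => inner_smul_left _ _ _)
  set S := ∑ j ∈ s \ Finset.range N, ‖⟪xx g μ j, x⟫_ℂ‖ * ‖⟪xx g μ j, E⟫_ℂ‖ with hS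
  have hS0 : 0 ≤ S := Finset.sum_nonneg (fun j _ => by positivity)
  have hnorm1 : ‖⟪E, E⟫_ℂ‖ ≤ S := by
    rw [hinner]
    refine le_trans (norm_sum_le _ _) ?_
    apply le_of_eq
    refine Finset.sum_congr rfl (fun j _ => ?_)
    rw [norm_mul, RCLike.norm_conj]
  have hcs : S^2 ≤ (∑ j ∈ s \ Finset.range N, ‖⟪xx g μ j, x⟫_ℂ‖^2)
      * (∑ j ∈ s \ Finset.range N, ‖⟪xx g μ j, E⟫_ℂ‖^2) :=
    Finset.sum_mul_sq_le_sq_mul_sq _ _ _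
  have hS2 : S^2 ≤ ρ * (C * ‖E‖^2) := by
    refine le_trans hcs ?_
    apply mul_le_mul hcs1 hcs2 (by positivity) hρ0
  have hSle : S ≤ Real.sqrt ρ * Real.sqrt C * ‖E‖ := by
    calc S = Real.sqrt (S^2) := (Real.sqrt_sq hS0).symm
      _ ≤ Real.sqrt (ρ * (C * ‖E‖^2)) := Real.sqrt_le_sqrt hS2
      _ = Real.sqrt ρ * Real.sqrt C * ‖E‖ := by
          rw [Real.sqrt_mul hρ0, Real.sqrt_mul hC, Real.sqrt_sq (norm_nonneg E)]
          ring
  have hEb : ‖E‖^2 ≤ Real.sqrt ρ * Real.sqrt C * ‖E‖ := by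
    calc ‖E‖^2 = (⟪E, E⟫_ℂ).re := hEE
      _ ≤ ‖⟪E, E⟫_ℂ‖ := re_le_norm _
      _ ≤ S := hnorm1
      _ ≤ Real.sqrt ρ * Real.sqrt C * ‖E‖ := hSle
  have hEfin : ‖E‖ ≤ Real.sqrt ρ * Real.sqrt C := by
    rcases eq_or_lt_of_le (norm_nonneg E) with h | h
    · rw [← h]; positivity
    · nlinarith [hEb]
  have hfinal : Real.sqrt ρ * Real.sqrt C ≤ ε/2 := by
    have h1 : ρ * C ≤ (ε/2)^2 := by nlinarith
    calc Real.sqrt ρ * Real.sqrt C = Real.sqrt (ρ * C) := (Real.sqrt_mul hρ0 _).symm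
      _ ≤ Real.sqrt ((ε/2)^2) := Real.sqrt_le_sqrt h1
      _ = ε/2 := Real.sqrt_sq (by linarith)
  calc ‖E - Rv g μ A lam x N‖ ≤ ‖E‖ + ‖Rv g μ A lam x N‖ := norm_sub_le _ _
    _ < ε/2 + δ := by
        have := le_trans hEfin hfinal
        linarith
    _ ≤ ε := by linarith
end
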